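/- arXiv:1112.1455 — 5 statements merged into one kernel-verified Lean document; each statement's English description precedes it below -/
import Mathlib

section
/- There is no order isomorphism between the complete lattice of open subsets of ℕ (with the discrete topology) and the complete lattice of open subsets of the one-point compactification ℕ ∪ {∞} of ℕ. (This is how the paper distinguishes the C*-algebras c₀ and c by the order structure of their open projections, even though they have isomorphic biduals.) -/
/-- There is no order isomorphism between the complete lattice of open subsets of `ℕ`
(with the discrete topology) and the complete lattice of open subsets of the one-point
compactification `OnePoint ℕ` of `ℕ`. -/
theorem no_orderIso_opens_nat_onePoint :
    IsEmpty (TopologicalSpace.Opens ℕ ≃o TopologicalSpace.Opens (OnePoint ℕ)) := by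
  constructor
  intro e
  -- the open set `ℕ ⊆ OnePoint ℕ`
  set U : TopologicalSpace.Opens (OnePoint ℕ) :=
    ⟨Set.range ((↑) : ℕ → OnePoint ℕ), OnePoint.isOpen_range_coe⟩ with hU
  set A : TopologicalSpace.Opens ℕ := e.symm U with hA
  set B : TopologicalSpace.Opens ℕ := ⟨(A : Set ℕ)ᶜ, isOpen_discrete _⟩ with hB
  have hsup : A ⊔ B = ⊤ := by
    apply le_antisymm le_top
    intro x _
    by_cases h : x ∈ A
    · exact Or.inl h
    · exact Or.inr h
  have hinf : A ⊓ B = ⊥ := by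
    apply le_antisymm _ bot_le
    rintro x ⟨hx, hx'⟩
    exact absurd hx hx'
  have h1 : U ⊔ e B = ⊤ := by
    rw [← e.apply_symm_apply U, ← hA, ← map_sup, hsup, map_top]
  have h2 : U ⊓ e B = ⊥ := by
    rw [← e.apply_symm_apply U, ← hA, ← map_inf, hinf, map_bot]
  -- e B ⊆ {∞}
  have hsub : (e B : Set (OnePoint ℕ)) ⊆ {OnePoint.infty} := by
    intro x hx
    rcases x with _ | n
    · rfl
    · exfalso
      have : (OnePoint.some n : OnePoint ℕ) ∈ U ⊓ e B := ⟨⟨n, rfl⟩, hx⟩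
      rw [h2] at this
      exact this
  -- e B must be empty, since {∞} is not open
  have hne : e B = ⊥ := by
    by_contra h
    have hmem : OnePoint.infty ∈ (e B : Set (OnePoint ℕ)) := by
      rcases TopologicalSpace.Opens.ne_bot_iff_nonempty _ |>.mp h with ⟨x, hx⟩
      have := hsub hx
      simp only [Set.mem_singleton_iff] at this
      rwa [← this]
    have heq : (e B : Set (OnePoint ℕ)) = {OnePoint.infty} :=
      le_antisymm hsub (by simpa using hmem)
    have hopen : IsOpen ({OnePoint.infty} : Set (OnePoint ℕ)) := heq ▸ (e B).isOpen
    have hcl : IsClosed (Set.range ((↑) : ℕ → OnePoint ℕ)) := by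
      rw [← OnePoint.compl_infty]
      exact hopen.isClosed_compl
    have hcpt : IsCompact (Set.range ((↑) : ℕ → OnePoint ℕ)) := hcl.isCompact
    have huniv : IsCompact (Set.univ : Set ℕ) := by
      rw [OnePoint.isOpenEmbedding_coe.toIsEmbedding.isCompact_iff, Set.image_univ]
      exact hcpt
    exact Set.infinite_univ (huniv.finite IsDiscrete.univ)
  rw [hne, sup_bot_eq] at h1
  have : OnePoint.infty ∈ (U : Set (OnePoint ℕ)) := by rw [h1]; trivial
  rcases this with ⟨n, hn⟩
  exact OnePoint.coe_ne_infty n hn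
end

section
/- Let D be a C*-algebra, C a commutative hereditary C*-subalgebra of D, and m an element of the multiplier algebra M(D) of D. Then for all x, y ∈ C one has ι(x)·m·ι(y) = ι(y)·m·ι(x) in M(D), where ι : D → M(D) is the canonical embedding. -/
open scoped MultiplierAlgebra ContinuousMapZero
open Filter Topology

set_option linter.unusedSectionVars false

/-- A *hereditary C*-subalgebra* of a C*-algebra `D`: a norm-closed star-subalgebra `C ⊆ D`
such that whenever `a ∈ D` and `b ∈ C` satisfy `0 ≤ a ≤ b`, then `a ∈ C`. -/
def IsHereditarySubalgebra {D : Type*} [NonUnitalCStarAlgebra D] [PartialOrder D]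
    [StarOrderedRing D] (C : NonUnitalStarSubalgebra ℂ D) : Prop :=
  IsClosed (C : Set D) ∧ ∀ ⦃a b : D⦄, b ∈ C → 0 ≤ a → a ≤ b → a ∈ C

section Aux

variable {D : Type*} [NonUnitalCStarAlgebra D]

private lemma fst_mul_eq' (m : 𝓜(ℂ, D)) (b c : D) : m.fst (b * c) = m.fst b * c := by
  have h : ∀ x : D, x * m.fst (b * c) = x * (m.fst b * c) := fun x => by
    rw [← m.central x (b * c), ← mul_assoc, m.central x b, mul_assoc]
  have hz : star (m.fst (b * c) - m.fst b * c) * (m.fst (b * c) - m.fst b * c) = 0 := by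
    rw [mul_sub, h, sub_self]
  exact sub_eq_zero.mp <| (CStarRing.star_mul_self_eq_zero_iff _).mp hz

private lemma mul_coe_eq' (m : 𝓜(ℂ, D)) (b : D) :
    m * (b : 𝓜(ℂ, D)) = ((m.fst b : D) : 𝓜(ℂ, D)) := by
  refine DoubleCentralizer.ext ℂ D _ _ (Prod.ext ?_ ?_)
  · ext c
    simpa [DoubleCentralizer.mul_fst, ContinuousLinearMap.mul_apply'] using fst_mul_eq' m b c
  · ext c
    simpa [DoubleCentralizer.mul_snd, ContinuousLinearMap.mul_apply'] using m.central c b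

private lemma coe_mul_coe'' (a b : D) :
    ((a * b : D) : 𝓜(ℂ, D)) = (a : 𝓜(ℂ, D)) * (b : 𝓜(ℂ, D)) :=
  map_mul (DoubleCentralizer.coeHom (𝕜 := ℂ) (A := D)) a b

variable (C : NonUnitalStarSubalgebra ℂ D)

private lemma cfcn_mem' (hC : IsClosed (C : Set D)) {a : D} (ha : a ∈ C) (f : ℝ → ℝ) :
    cfcₙ f a ∈ C := by
  by_cases h : IsSelfAdjoint a ∧ ContinuousOn f (quasispectrum ℝ a) ∧ f 0 = 0
  · obtain ⟨ha', hf, hf0⟩ := h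
    rw [cfcₙ_apply f a hf hf0 ha']
    set φ : C(quasispectrum ℝ a, ℝ)₀ →⋆ₙₐ[ℝ] D := cfcₙHom ha' with hφdef
    have hφ : Continuous φ := (cfcₙHom_isClosedEmbedding (R := ℝ) ha').continuous
    have hmaps : Set.MapsTo φ
        (NonUnitalStarAlgebra.adjoin ℝ {(ContinuousMapZero.id (quasispectrum ℝ a) : C(quasispectrum ℝ a, ℝ)₀)} :
          Set C(quasispectrum ℝ a, ℝ)₀) (C : Set D) := by
      rintro g hg
      induction hg using NonUnitalStarAlgebra.adjoin_induction with
      | mem g hg =>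
        simp only [Set.mem_singleton_iff] at hg
        subst hg
        have hid : (ContinuousMapZero.id (quasispectrum ℝ a) : C(quasispectrum ℝ a, ℝ)₀) =
            ⟨(ContinuousMap.id ℝ).restrict <| quasispectrum ℝ a, rfl⟩ := rfl
        show cfcₙHom ha' (ContinuousMapZero.id (quasispectrum ℝ a)) ∈ C
        rw [cfcₙHom_id ha']; exact ha
      | add g₁ g₂ _ _ h₁ h₂ => rw [map_add]; exact add_mem h₁ h₂
      | zero => rw [map_zero]; exact zero_mem C
      | mul g₁ g₂ _ _ h₁ h₂ => rw [map_mul]; exact mul_mem h₁ h₂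
      | smul r g _ h₁ =>
        rw [map_smul]
        show (r : ℝ) • (φ g) ∈ C
        rw [← Complex.coe_smul]
        exact SMulMemClass.smul_mem _ h₁
      | star g _ h₁ => rw [map_star]; exact star_mem h₁
    have hdense := ContinuousMapZero.adjoin_id_dense (quasispectrum ℝ a)
    have hmem : (⟨⟨_, hf.restrict⟩, hf0⟩ : C(quasispectrum ℝ a, ℝ)₀) ∈
        closure (NonUnitalStarAlgebra.adjoin ℝ
          {(ContinuousMapZero.id (quasispectrum ℝ a) : C(quasispectrum ℝ a, ℝ)₀)} : Set _) := by
      rw [hdense.closure_eq]; trivial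
    have := map_mem_closure hφ hmem hmaps
    rwa [hC.closure_eq] at this
  · obtain h' := cfcₙ_apply_of_not_and_and a (by tauto)
    rw [h']; exact zero_mem C

end Aux

section Ordered

variable {D : Type*} [NonUnitalCStarAlgebra D] [PartialOrder D] [StarOrderedRing D]
variable {C : NonUnitalStarSubalgebra ℂ D}

private lemma conj_mem_of_nonneg' (hC : IsHereditarySubalgebra C) {c : D} (hc : c ∈ C) {d : D}
    (hd : 0 ≤ d) : star c * d * c ∈ C := by
  have hmem : ‖d‖ • (star c * c) ∈ C := by
    rw [← Complex.coe_smul]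
    exact SMulMemClass.smul_mem _ (mul_mem (star_mem hc) hc)
  exact hC.2 hmem (star_left_conjugate_nonneg hd c) (CStarAlgebra.star_left_conjugate_le_norm_smul hd.isSelfAdjoint)

open ComplexStarModule in
private lemma conj_mem' (hC : IsHereditarySubalgebra C) {c : D} (hc : c ∈ C) (d : D) :
    star c * d * c ∈ C := by
  have key : ∀ s : D, IsSelfAdjoint s → star c * s * c ∈ C := fun s hs => by
    have h1 : star c * s * c = star c * s⁺ * c - star c * s⁻ * c := by
      rw [← sub_mul, ← mul_sub, CFC.posPart_sub_negPart s hs]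
    rw [h1]
    exact sub_mem (conj_mem_of_nonneg' hC hc (CFC.posPart_nonneg s))
      (conj_mem_of_nonneg' hC hc (CFC.negPart_nonneg s))
  have hd : d = (ℜ d : D) + Complex.I • (ℑ d : D) := (realPart_add_I_smul_imaginaryPart d).symm
  rw [hd, mul_add, add_mul, mul_smul_comm, smul_mul_assoc]
  exact add_mem (key _ (ℜ d).2) (SMulMemClass.smul_mem _ (key _ (ℑ d).2))

noncomputable def fappr' (n : ℕ) (t : ℝ) : ℝ := min ((n + 1 : ℝ) * t) 1

private lemma fappr'_continuous (n : ℕ) : Continuous (fappr' n) :=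
  (continuous_const.mul continuous_id).min continuous_const

private lemma fappr'_zero (n : ℕ) : fappr' n 0 = 0 := by simp [fappr']

private lemma sq_expand' (s q p : D) (hs : s * s = p) :
    (s - q * s) * (s - s * q) = p - p * q - q * p + q * (p * q) := by
  subst hs; noncomm_ring

private lemma conj_expand' (u v q : D) :
    (u - q * u) * (v - v * q) = u * v - (u * v) * q - q * (u * v) + q * ((u * v) * q) := by
  noncomm_ring

private lemma K_linear' (p p' q : D) :
    (p - p * q - q * p + q * (p * q)) - (p' - p' * q - q * p' + q * (p' * q))
      = (p - p') - (p - p') * q - q * (p - p') + q * ((p - p') * q) := by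
  noncomm_ring

private lemma approx_norm_bound' {a : D} (ha : 0 ≤ a) {c : D} (hc : star c * c ≤ a) (n : ℕ) :
    ‖c - c * (cfcₙ (fappr' n) a * cfcₙ (fappr' n) a)‖ ≤ Real.sqrt (1 / (n + 1)) := by
  have ha' : IsSelfAdjoint a := ha.isSelfAdjoint
  set N : ℝ := (n : ℝ) + 1 with hN
  have hNpos : 0 < N := by positivity
  set F : ℝ → ℝ := fun t => fappr' n t * fappr' n t with hF
  have hFc : Continuous F := (fappr'_continuous n).mul (fappr'_continuous n)
  have hF0 : F 0 = 0 := by simp [hF, fappr'_zero]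
  set q : D := cfcₙ F a with hqdef
  have hq : cfcₙ (fappr' n) a * cfcₙ (fappr' n) a = q :=
    (cfcₙ_mul _ _ a ((fappr'_continuous n).continuousOn) (fappr'_zero n)
      ((fappr'_continuous n).continuousOn) (fappr'_zero n)).symm
  rw [hq]
  have hq_nonneg : 0 ≤ q := cfcₙ_nonneg (fun t _ => mul_self_nonneg _)
  have hq_sa : star q = q := hq_nonneg.isSelfAdjoint.star_eq
  set z : D := c - c * q with hz
  set B : D := star c * c with hB
  have hzz : star z * z = B - B * q - q * B + q * (B * q) := by
    have hstar : star z = star c - q * star c := by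
      rw [hz, star_sub, star_mul, hq_sa]
    rw [hstar, hz, hB, conj_expand']
  have hKnonneg : ∀ p : D, 0 ≤ p → 0 ≤ p - p * q - q * p + q * (p * q) := by
    intro p hp
    rw [← sq_expand' (CFC.sqrt p) q p (CFC.sqrt_mul_sqrt_self p hp)]
    have hsqrt_sa : star (CFC.sqrt p) = CFC.sqrt p :=
      (CFC.sqrt_nonneg (a := p)).isSelfAdjoint.star_eq
    have : CFC.sqrt p - q * CFC.sqrt p = star (CFC.sqrt p - CFC.sqrt p * q) := by
      rw [star_sub, star_mul, hsqrt_sa, hq_sa]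
    rw [this]
    exact star_mul_self_nonneg _
  have hzz_nonneg : 0 ≤ star z * z := star_mul_self_nonneg z
  have hle : star z * z ≤ a - a * q - q * a + q * (a * q) := by
    rw [hzz, ← sub_nonneg, K_linear']
    exact hKnonneg _ (by rwa [sub_nonneg])
  have h1 : cfcₙ (fun t : ℝ => t * F t) a = a * q := by
    rw [cfcₙ_mul (fun t : ℝ => t) F a (continuous_id'.continuousOn) rfl hFc.continuousOn hF0,
      cfcₙ_id' ℝ a]
  have h2 : cfcₙ (fun t : ℝ => F t * t) a = q * a := by
    rw [cfcₙ_mul F (fun t : ℝ => t) a hFc.continuousOn hF0 (continuous_id'.continuousOn) rfl,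
      cfcₙ_id' ℝ a]
  have h3 : cfcₙ (fun t : ℝ => F t * (t * F t)) a = q * (a * q) := by
    rw [cfcₙ_mul F (fun t : ℝ => t * F t) a hFc.continuousOn hF0
      ((continuous_id'.mul hFc).continuousOn) (by simp [hF0]), h1]
  have hKa : cfcₙ (fun t : ℝ => t - t * F t - F t * t + F t * (t * F t)) a
      = a - a * q - q * a + q * (a * q) := by
    rw [cfcₙ_add (fun t : ℝ => t - t * F t - F t * t) (fun t : ℝ => F t * (t * F t)) a
      (((continuous_id'.sub (continuous_id'.mul hFc)).sub
        (hFc.mul continuous_id')).continuousOn) (by simp [hF0])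
      ((hFc.mul (continuous_id'.mul hFc)).continuousOn) (by simp [hF0])]
    rw [cfcₙ_sub (fun t : ℝ => t - t * F t) (fun t : ℝ => F t * t) a
      ((continuous_id'.sub (continuous_id'.mul hFc)).continuousOn)
      (by simp [hF0]) ((hFc.mul continuous_id').continuousOn) (by simp [hF0])]
    rw [cfcₙ_sub (fun t : ℝ => t) (fun t : ℝ => t * F t) a (continuous_id'.continuousOn) rfl
      ((continuous_id'.mul hFc).continuousOn) (by simp [hF0])]
    rw [h1, h2, h3, cfcₙ_id' ℝ a]
  have hφbound : ∀ t ∈ quasispectrum ℝ a,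
      ‖t - t * F t - F t * t + F t * (t * F t)‖ ≤ 1 / N := by
    intro t ht
    have ht0 : 0 ≤ t := quasispectrum_nonneg_of_nonneg a ha t ht
    set u : ℝ := fappr' n t with hu
    have hueq : t - t * F t - F t * t + F t * (t * F t) = t * (1 - u * u) ^ 2 := by
      simp only [hF]; ring
    have hu0 : 0 ≤ u := le_min (by positivity) zero_le_one
    have hu1 : u ≤ 1 := min_le_right _ _
    rw [hueq, Real.norm_eq_abs, abs_of_nonneg (by positivity)]
    rcases le_or_gt (N * t) 1 with h | h
    · have htle : t ≤ 1 / N := by rw [le_div_iff₀ hNpos]; linarith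
      have h4 : u * u ≤ 1 := by nlinarith
      have h5 : (1 - u * u) ^ 2 ≤ 1 := by nlinarith
      have h6 := mul_le_mul_of_nonneg_left h5 ht0
      linarith
    · have hu' : u = 1 := min_eq_right (by simpa [hN, fappr'] using h.le)
      rw [hu']
      have : (0:ℝ) < 1 / N := by positivity
      simpa using this.le
  have hnorm : ‖star z * z‖ ≤ 1 / N := by
    calc ‖star z * z‖ ≤ ‖a - a * q - q * a + q * (a * q)‖ :=
          CStarAlgebra.norm_le_norm_of_nonneg_of_le hzz_nonneg hle
      _ = ‖cfcₙ (fun t : ℝ => t - t * F t - F t * t + F t * (t * F t)) a‖ := by rw [hKa]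
      _ ≤ 1 / N := norm_cfcₙ_le hφbound
  have : ‖z‖ ^ 2 ≤ 1 / N := by
    rwa [sq, ← CStarRing.norm_star_mul_self]
  calc ‖z‖ = Real.sqrt (‖z‖ ^ 2) := by rw [Real.sqrt_sq (norm_nonneg z)]
    _ ≤ Real.sqrt (1 / (n + 1)) := Real.sqrt_le_sqrt this

private lemma approx_tendsto' {a : D} (ha : 0 ≤ a) {c : D} (hc : star c * c ≤ a) :
    Tendsto (fun n : ℕ => c * (cfcₙ (fappr' n) a * cfcₙ (fappr' n) a)) atTop (𝓝 c) := by
  have hsqrt : Tendsto (fun n : ℕ => Real.sqrt (1 / ((n : ℝ) + 1))) atTop (𝓝 0) := by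
    have h0 : Tendsto (fun n : ℕ => 1 / ((n : ℝ) + 1)) atTop (𝓝 0) :=
      tendsto_one_div_add_atTop_nhds_zero_nat
    exact (Real.continuous_sqrt.tendsto' 0 0 (by simp)).comp h0
  rw [tendsto_iff_norm_sub_tendsto_zero]
  exact squeeze_zero (fun n => norm_nonneg _)
    (fun n => by rw [norm_sub_rev]; exact approx_norm_bound' ha hc n) hsqrt

end Ordered

/-- If `C` is a commutative hereditary C*-subalgebra of a C*-algebra `D` and `m` is an element
of the multiplier algebra `M(D) = 𝓜(ℂ, D)`, then `x m y = y m x` in `M(D)` for all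
`x, y ∈ C`, where elements of `D` are viewed in `M(D)` via the canonical embedding. -/
theorem comm_hereditary_multiplier_comm
    {D : Type*} [NonUnitalCStarAlgebra D] [PartialOrder D] [StarOrderedRing D]
    (C : NonUnitalStarSubalgebra ℂ D) (hC : IsHereditarySubalgebra C)
    (hcomm : ∀ x ∈ C, ∀ y ∈ C, x * y = y * x) (m : 𝓜(ℂ, D)) :
    ∀ x ∈ C, ∀ y ∈ C,
      (x : 𝓜(ℂ, D)) * m * (y : 𝓜(ℂ, D)) = (y : 𝓜(ℂ, D)) * m * (x : 𝓜(ℂ, D)) := by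
  intro x hx y hy
  suffices h : x * m.fst y = y * m.fst x by
    calc (x : 𝓜(ℂ, D)) * m * (y : 𝓜(ℂ, D))
        = (x : 𝓜(ℂ, D)) * ((m.fst y : D) : 𝓜(ℂ, D)) := by rw [mul_assoc, mul_coe_eq' m y]
      _ = ((x * m.fst y : D) : 𝓜(ℂ, D)) := (coe_mul_coe'' _ _).symm
      _ = ((y * m.fst x : D) : 𝓜(ℂ, D)) := by rw [h]
      _ = (y : 𝓜(ℂ, D)) * ((m.fst x : D) : 𝓜(ℂ, D)) := coe_mul_coe'' _ _
      _ = (y : 𝓜(ℂ, D)) * m * (x : 𝓜(ℂ, D)) := by rw [mul_assoc, mul_coe_eq' m x]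
  set a : D := star x * x + x * star x + star y * y + y * star y with hadef
  have ha : 0 ≤ a := by
    refine add_nonneg (add_nonneg (add_nonneg ?_ ?_) ?_) ?_
    exacts [star_mul_self_nonneg x, mul_star_self_nonneg x,
      star_mul_self_nonneg y, mul_star_self_nonneg y]
  have ha_mem : a ∈ C :=
    add_mem (add_mem (add_mem (mul_mem (star_mem hx) hx) (mul_mem hx (star_mem hx)))
      (mul_mem (star_mem hy) hy)) (mul_mem hy (star_mem hy))
  have hb : ∀ b : D, b ∈ ({star x * x, x * star x, star y * y, y * star y} : Set D) → b ≤ a := by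
    intro b hb
    rw [← sub_nonneg]
    rcases hb with h | h | h | h <;> subst h
    · have : a - star x * x = x * star x + star y * y + y * star y := by rw [hadef]; abel
      rw [this]
      exact add_nonneg (add_nonneg (mul_star_self_nonneg x) (star_mul_self_nonneg y))
        (mul_star_self_nonneg y)
    · have : a - x * star x = star x * x + star y * y + y * star y := by rw [hadef]; abel
      rw [this]
      exact add_nonneg (add_nonneg (star_mul_self_nonneg x) (star_mul_self_nonneg y))
        (mul_star_self_nonneg y)
    · have : a - star y * y = star x * x + x * star x + y * star y := by rw [hadef]; abel
      rw [this]
      exact add_nonneg (add_nonneg (star_mul_self_nonneg x) (mul_star_self_nonneg x))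
        (mul_star_self_nonneg y)
    · have : a - y * star y = star x * x + x * star x + star y * y := by rw [hadef]; abel
      rw [this]
      exact add_nonneg (add_nonneg (star_mul_self_nonneg x) (mul_star_self_nonneg x))
        (star_mul_self_nonneg y)
  set e : ℕ → D := fun n => cfcₙ (fappr' n) a with he
  have he_mem : ∀ n, e n ∈ C := fun n => cfcn_mem' C hC.1 ha_mem _
  have he_nonneg : ∀ n, 0 ≤ e n := fun n =>
    cfcₙ_nonneg (fun t ht => le_min
      (mul_nonneg (by positivity) (quasispectrum_nonneg_of_nonneg a ha t ht)) zero_le_one)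
  have he_sa : ∀ n, star (e n) = e n := fun n => (he_nonneg n).isSelfAdjoint.star_eq
  -- the two sequences
  have limit1 : Tendsto (fun n => (x * (e n * e n)) * m.fst ((e n * e n) * y))
      atTop (𝓝 (x * m.fst y)) := by
    have t1 : Tendsto (fun n => x * (e n * e n)) atTop (𝓝 x) :=
      approx_tendsto' ha (hb _ (by simp))
    have t2' : Tendsto (fun n => star y * (e n * e n)) atTop (𝓝 (star y)) := by
      refine approx_tendsto' ha ?_
      rw [star_star]
      exact hb _ (by simp)
    have t2 : Tendsto (fun n => (e n * e n) * y) atTop (𝓝 y) := by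
      have := (continuous_star.tendsto (star y)).comp t2'
      simpa only [Function.comp_def, star_mul, star_star, he_sa] using this
    exact t1.mul ((m.fst.continuous.tendsto y).comp t2)
  have limit2 : Tendsto (fun n => (y * (e n * e n)) * m.fst ((e n * e n) * x))
      atTop (𝓝 (y * m.fst x)) := by
    have t1 : Tendsto (fun n => y * (e n * e n)) atTop (𝓝 y) :=
      approx_tendsto' ha (hb _ (by simp))
    have t2' : Tendsto (fun n => star x * (e n * e n)) atTop (𝓝 (star x)) := by
      refine approx_tendsto' ha ?_
      rw [star_star]
      exact hb _ (by simp)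
    have t2 : Tendsto (fun n => (e n * e n) * x) atTop (𝓝 x) := by
      have := (continuous_star.tendsto (star x)).comp t2'
      simpa only [Function.comp_def, star_mul, star_star, he_sa] using this
    exact t1.mul ((m.fst.continuous.tendsto x).comp t2)
  -- termwise equality of the two sequences
  have hterm : ∀ n, (x * (e n * e n)) * m.fst ((e n * e n) * y)
      = (y * (e n * e n)) * m.fst ((e n * e n) * x) := by
    intro n
    have hLsplit : ∀ w : D, m.fst ((e n * e n) * w) = m.fst (e n) * e n * w := fun w => by
      rw [fst_mul_eq' m (e n * e n) w, fst_mul_eq' m (e n) (e n)]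
    have hc_mem : e n * m.fst (e n) * e n ∈ C := by
      have := conj_mem' hC (he_mem n) (m.fst (e n))
      rwa [he_sa n] at this
    set u : D := e n * (e n * m.fst (e n) * e n) with hu
    have hu_mem : u ∈ C := mul_mem (he_mem n) hc_mem
    have lhs_eq : (x * (e n * e n)) * m.fst ((e n * e n) * y) = x * u * y := by
      rw [hLsplit y, hu]
      noncomm_ring
    have rhs_eq : (y * (e n * e n)) * m.fst ((e n * e n) * x) = y * u * x := by
      rw [hLsplit x, hu]
      noncomm_ring
    rw [lhs_eq, rhs_eq]
    calc x * u * y = x * (y * u) := by rw [mul_assoc, hcomm u hu_mem y hy]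
      _ = y * x * u := by rw [← mul_assoc, hcomm x hx y hy]
      _ = y * (u * x) := by rw [mul_assoc, hcomm x hx u hu_mem]
      _ = y * u * x := (mul_assoc y u x).symm
  have limit1' : Tendsto (fun n => (y * (e n * e n)) * m.fst ((e n * e n) * x))
      atTop (𝓝 (x * m.fst y)) := by
    convert limit1 using 2 with n
    exact (hterm _).symm
  exact tendsto_nhds_unique limit1' limit2
end

section
/- Let D be a C*-algebra and let e be a projection in the multiplier algebra M(D) (i.e. e = e* = e²). Let D_e = {a ∈ D : e·ι(a)·e = ι(a)} be the corner of D determined by e, and assume the corner is full, i.e. the smallest closed two-sided ideal of D containing D_e is D itself. If D contains a nonzero commutative hereditary C*-subalgebra, then D_e contains a nonzero commutative hereditary C*-subalgebra of D. -/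
open scoped MultiplierAlgebra

namespace CornerProofAux

open scoped CStarAlgebra

variable {D : Type*} [NonUnitalCStarAlgebra D] [PartialOrder D] [StarOrderedRing D]

lemma left_cancel {u v : D} (h : ∀ z : D, z * u = z * v) : u = v := by
  have h2 : star (u - v) * (u - v) = 0 := by
    rw [mul_sub, h (star (u - v)), sub_self]
  rw [CStarRing.star_mul_self_eq_zero_iff] at h2
  exact sub_eq_zero.mp h2

lemma fst_mul_right (m : 𝓜(ℂ, D)) (x y : D) : m.fst (x * y) = m.fst x * y := by
  refine left_cancel fun z => ?_
  calc z * m.fst (x * y) = m.snd z * (x * y) := (m.central z (x * y)).symm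
    _ = m.snd z * x * y := (mul_assoc _ _ _).symm
    _ = z * m.fst x * y := by rw [m.central z x]
    _ = z * (m.fst x * y) := mul_assoc _ _ _

lemma mul_coe (m : 𝓜(ℂ, D)) (x : D) :
    m * (x : 𝓜(ℂ, D)) = ((m.fst x : D) : 𝓜(ℂ, D)) := by
  refine DoubleCentralizer.ext ℂ D _ _ (Prod.ext ?_ ?_)
  · show (m * (x : 𝓜(ℂ, D))).fst = ((m.fst x : D) : 𝓜(ℂ, D)).fst
    rw [DoubleCentralizer.mul_fst, DoubleCentralizer.coe_fst, DoubleCentralizer.coe_fst]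
    ext y
    simp only [ContinuousLinearMap.mul_apply, ContinuousLinearMap.mul_apply']
    exact fst_mul_right m x y
  · show (m * (x : 𝓜(ℂ, D))).snd = ((m.fst x : D) : 𝓜(ℂ, D)).snd
    rw [DoubleCentralizer.mul_snd, DoubleCentralizer.coe_snd, DoubleCentralizer.coe_snd]
    ext y
    simp only [ContinuousLinearMap.mul_apply, ContinuousLinearMap.flip_apply,
      ContinuousLinearMap.mul_apply']
    exact m.central y x

lemma coe_mul (a b : D) : ((a * b : D) : 𝓜(ℂ, D)) = (a : 𝓜(ℂ, D)) * (b : 𝓜(ℂ, D)) :=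
  map_mul (DoubleCentralizer.coeHom (𝕜 := ℂ) (A := D)) a b

lemma coe_star (a : D) : ((star a : D) : 𝓜(ℂ, D)) = star (a : 𝓜(ℂ, D)) :=
  map_star (DoubleCentralizer.coeHom (𝕜 := ℂ) (A := D)) a

lemma coe_zero : ((0 : D) : 𝓜(ℂ, D)) = 0 :=
  map_zero (DoubleCentralizer.coeHom (𝕜 := ℂ) (A := D))

lemma coe_injective : Function.Injective ((↑) : D → 𝓜(ℂ, D)) := by
  intro a b h
  have h0 : ((a - b : D) : 𝓜(ℂ, D)) = 0 := by
    have := map_sub (DoubleCentralizer.coeHom (𝕜 := ℂ) (A := D)) a b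
    simp only [DoubleCentralizer.coeHom_apply] at this
    rw [this, h, sub_self]
  set d : D := a - b with hd
  have h1 : ContinuousLinearMap.mul ℂ D d = 0 := by
    rw [← DoubleCentralizer.coe_fst d, h0, DoubleCentralizer.zero_fst]
  have h2 : d * star d = 0 := by
    have h3 := congrArg (fun T : D →L[ℂ] D => T (star d)) h1
    simpa [ContinuousLinearMap.mul_apply'] using h3
  rw [CStarRing.mul_star_self_eq_zero_iff] at h2
  rw [hd] at h2
  exact sub_eq_zero.mp h2

lemma continuous_coe : Continuous ((↑) : D → 𝓜(ℂ, D)) := by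
  have : Continuous (DoubleCentralizer.coeHom (𝕜 := ℂ) (A := D)) := by
    refine AddMonoidHomClass.continuous_of_bound _ 1 fun x => ?_
    rw [one_mul]
    show ‖(x : 𝓜(ℂ, D))‖ ≤ ‖x‖
    rw [DoubleCentralizer.norm_def, Prod.norm_def]
    refine max_le ?_ ?_
    · exact ContinuousLinearMap.opNorm_mul_apply_le ℂ D x
    · refine ContinuousLinearMap.opNorm_le_bound _ (norm_nonneg x) fun y => ?_
      show ‖y * x‖ ≤ ‖x‖ * ‖y‖
      rw [mul_comm ‖x‖]
      exact norm_mul_le y x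
  exact this

lemma real_smul_mem (B : NonUnitalStarSubalgebra ℂ D) {x : D} (hx : x ∈ B) (r : ℝ) :
    r • x ∈ B := by
  have := SMulMemClass.smul_mem (algebraMap ℝ ℂ r) hx (s := B)
  rwa [algebraMap_smul] at this

lemma conj_mem {B : NonUnitalStarSubalgebra ℂ D} (hB : IsHereditarySubalgebra B)
    {z : D} (hz : z ∈ B) (m : D) : star z * m * z ∈ B := by
  have hzz : star z * z ∈ B := mul_mem (star_mem hz) hz
  have key : ∀ m : D, IsSelfAdjoint m → star z * m * z ∈ B := by
    intro m hm
    have h1 : star z * m * z ≤ ‖m‖ • (star z * z) := CStarAlgebra.star_left_conjugate_le_norm_smul hm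
    have h2 : -(star z * m * z) ≤ ‖m‖ • (star z * z) := by
      have := CStarAlgebra.star_left_conjugate_le_norm_smul (a := z) (b := -m) hm.neg
      rwa [mul_neg, neg_mul, norm_neg] at this
    have hq0 : (0 : D) ≤ ‖m‖ • (star z * z) + star z * m * z := by
      calc (0 : D) = -(star z * m * z) + star z * m * z := by simp
        _ ≤ ‖m‖ • (star z * z) + star z * m * z := add_le_add_left h2 _
    have hqle : ‖m‖ • (star z * z) + star z * m * z ≤
        ‖m‖ • (star z * z) + ‖m‖ • (star z * z) := add_le_add_right h1 _
    have hupper : ‖m‖ • (star z * z) + ‖m‖ • (star z * z) ∈ B :=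
      add_mem (real_smul_mem B hzz _) (real_smul_mem B hzz _)
    have hq_mem : ‖m‖ • (star z * z) + star z * m * z ∈ B := hB.2 hupper hq0 hqle
    have : star z * m * z = (‖m‖ • (star z * z) + star z * m * z) - ‖m‖ • (star z * z) := by
      abel
    rw [this]
    exact sub_mem hq_mem (real_smul_mem B hzz _)
  obtain ⟨m₂, hm₂sa, hmeq⟩ : ∃ m₂ : D, IsSelfAdjoint m₂ ∧
      m = (2 : ℂ)⁻¹ • (m + star m) + Complex.I • ((2 : ℂ)⁻¹ • m₂) := by
    refine ⟨(-Complex.I) • (m - star m), ?_, ?_⟩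
    · rw [IsSelfAdjoint, star_smul, star_sub, star_star,
        show star (-Complex.I) = Complex.I by simp,
        show Complex.I • (star m - m) = (-Complex.I) • (m - star m) by
          rw [smul_sub, neg_smul, smul_sub, neg_sub]]
    · rw [smul_smul, smul_smul,
        show Complex.I * (2 : ℂ)⁻¹ * -Complex.I = (2 : ℂ)⁻¹ by
          rw [mul_comm Complex.I ((2 : ℂ)⁻¹), mul_assoc, mul_neg, Complex.I_mul_I, neg_neg,
            mul_one]]
      module
  have hm₁sa : IsSelfAdjoint (m + star m) := by
    rw [IsSelfAdjoint, star_add, star_star, add_comm]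
  have expand : star z * m * z = (2 : ℂ)⁻¹ • (star z * (m + star m) * z) +
      Complex.I • ((2 : ℂ)⁻¹ • (star z * m₂ * z)) := by
    conv_lhs => rw [hmeq]
    simp only [mul_add, add_mul, mul_smul_comm, smul_mul_assoc]
  rw [expand]
  exact add_mem (SMulMemClass.smul_mem _ (key _ hm₁sa))
    (SMulMemClass.smul_mem _ (SMulMemClass.smul_mem _ (key _ hm₂sa)))

set_option maxHeartbeats 2000000 in
lemma mem_closure_conj {x y : D} (hx : 0 ≤ x) (hxy : x ≤ y) :
    x ∈ closure {t : D | ∃ a : D, t = y * a * y} := by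
  have hy : 0 ≤ y := hx.trans hxy
  rw [Metric.mem_closure_iff]
  intro ε hε
  obtain ⟨k, hk1, hkε⟩ : ∃ k : ℝ, 1 ≤ k ∧ 2 * Real.sqrt (‖x‖ * k⁻¹) < ε := by
    refine ⟨max 1 ((4 * ‖x‖ + 1) / ε ^ 2), le_max_left _ _, ?_⟩
    set k := max 1 ((4 * ‖x‖ + 1) / ε ^ 2) with hk
    have hk0 : (0 : ℝ) < k := lt_of_lt_of_le one_pos (le_max_left _ _)
    have hε2 : (0 : ℝ) < ε ^ 2 := by positivity
    have hk2 : (4 * ‖x‖ + 1) / ε ^ 2 ≤ k := le_max_right _ _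
    have hk3 : 4 * ‖x‖ + 1 ≤ k * ε ^ 2 := by
      rw [div_le_iff₀ hε2] at hk2
      linarith
    have h4 : ‖x‖ * k⁻¹ < ε ^ 2 / 4 := by
      rw [mul_inv_lt_iff₀ hk0]
      nlinarith
    have h5 : Real.sqrt (‖x‖ * k⁻¹) < ε / 2 := by
      have h6 : ε ^ 2 / 4 = (ε / 2) ^ 2 := by ring
      rw [h6] at h4
      calc Real.sqrt (‖x‖ * k⁻¹) < Real.sqrt ((ε / 2) ^ 2) := by
            refine Real.sqrt_lt_sqrt ?_ h4
            positivity
        _ = ε / 2 := Real.sqrt_sq (by positivity)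
    linarith
  have hk0 : (0 : ℝ) < k := lt_of_lt_of_le one_pos hk1
  set g : ℝ → ℝ := fun t => min (k ^ 3 * t) ((max t k⁻¹) ^ 2)⁻¹ with hg
  have hmaxpos : ∀ t : ℝ, 0 < max t k⁻¹ :=
    fun t => lt_of_lt_of_le (inv_pos.mpr hk0) (le_max_right _ _)
  have hgc : Continuous g := by
    refine Continuous.min (by fun_prop) (Continuous.inv₀ (by fun_prop) ?_)
    intro t
    exact ne_of_gt (pow_pos (hmaxpos t) 2)
  have hg0 : g 0 = 0 := by
    rw [hg]
    simp only [mul_zero]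
    exact min_eq_left (by positivity)
  set f : ℝ → ℝ := fun t => t * g t * t with hf
  have hfc : Continuous f := (continuous_id.mul hgc).mul continuous_id
  have hg_nonneg : ∀ t : ℝ, 0 ≤ t → 0 ≤ g t := by
    intro t ht
    refine le_min (by positivity) (by positivity)
  have hf_nonneg : ∀ t : ℝ, 0 ≤ t → 0 ≤ f t :=
    fun t ht => mul_nonneg (mul_nonneg ht (hg_nonneg t ht)) ht
  have hf_le_one : ∀ t : ℝ, 0 ≤ t → f t ≤ 1 := by
    intro t ht
    have h1 : f t ≤ t * ((max t k⁻¹) ^ 2)⁻¹ * t :=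
      mul_le_mul_of_nonneg_right (mul_le_mul_of_nonneg_left (min_le_right _ _) ht) ht
    refine h1.trans ?_
    rw [show t * ((max t k⁻¹) ^ 2)⁻¹ * t = t ^ 2 / (max t k⁻¹) ^ 2 by ring]
    refine div_le_one_of_le₀ ?_ (by positivity)
    exact pow_le_pow_left₀ ht (le_max_left _ _) 2
  have hf_one : ∀ t : ℝ, k⁻¹ ≤ t → f t = 1 := by
    intro t ht
    have ht0 : 0 < t := lt_of_lt_of_le (inv_pos.mpr hk0) ht
    have hkt : 1 ≤ k * t := by
      have := mul_le_mul_of_nonneg_left ht hk0.le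
      rwa [mul_inv_cancel₀ (ne_of_gt hk0)] at this
    have hg_eq : g t = (t ^ 2)⁻¹ := by
      rw [hg]
      simp only [max_eq_left ht]
      refine min_eq_right ?_
      rw [inv_eq_one_div, div_le_iff₀ (pow_pos ht0 2)]
      calc (1 : ℝ) ≤ (k * t) ^ 3 := one_le_pow₀ hkt
        _ = k ^ 3 * t * t ^ 2 := by ring
    rw [hf]
    simp only [hg_eq]
    rw [show t * (t ^ 2)⁻¹ * t = t ^ 2 / t ^ 2 by ring, div_self (by positivity)]
  have hkey : ∀ t : ℝ, 0 ≤ t → (1 - f t) ^ 2 * t ≤ k⁻¹ := by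
    intro t ht
    rcases le_or_gt t k⁻¹ with h | h
    · have hf0 := hf_nonneg t ht
      have hf1 := hf_le_one t ht
      have h1 : (1 - f t) ^ 2 ≤ 1 := by nlinarith
      calc (1 - f t) ^ 2 * t ≤ 1 * t := mul_le_mul_of_nonneg_right h1 ht
        _ = t := one_mul t
        _ ≤ k⁻¹ := h
    · rw [hf_one t h.le, show ((1 : ℝ) - 1) ^ 2 * t = 0 by ring]
      positivity
  -- pass to the unitization
  set X : D⁺¹ := (x : D⁺¹) with hX_def
  set Y : D⁺¹ := (y : D⁺¹) with hY_def
  have hX0 : 0 ≤ X := Unitization.inr_nonneg_iff.mpr hx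
  have hY0 : 0 ≤ Y := Unitization.inr_nonneg_iff.mpr hy
  have hXsa : IsSelfAdjoint X := IsSelfAdjoint.of_nonneg hX0
  have hYsa : IsSelfAdjoint Y := IsSelfAdjoint.of_nonneg hY0
  have hXY : X ≤ Y :=
    (Unitization.inr_le_iff x y (IsSelfAdjoint.of_nonneg hx) (IsSelfAdjoint.of_nonneg hy)).mpr hxy
  have hspec : ∀ t ∈ spectrum ℝ Y, 0 ≤ t := fun t ht => spectrum_nonneg_of_nonneg hY0 ht
  set F : D⁺¹ := cfc f Y with hF_def
  have hFsa : IsSelfAdjoint F := cfc_predicate f Y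
  have hgY : ((cfcₙ g y : D) : D⁺¹) = cfc g Y := Unitization.real_cfcₙ_eq_cfc_inr y g hg0
  have hF_eq : F = Y * cfc g Y * Y := by
    rw [hF_def]
    rw [cfc_mul (fun t => t * g t) (fun t : ℝ => t) Y (by fun_prop) (by fun_prop),
      cfc_mul (fun t : ℝ => t) g Y (by fun_prop) (by fun_prop), cfc_id' ℝ Y]
  have hE : ((y * cfcₙ g y * y : D) : D⁺¹) = F := by
    rw [Unitization.inr_mul, Unitization.inr_mul, hgY, hF_eq]
  have h1F : (1 : D⁺¹) - F = cfc (fun t => 1 - f t) Y := by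
    rw [hF_def, cfc_sub (fun _ : ℝ => (1 : ℝ)) f Y (by fun_prop) (by fun_prop), cfc_const_one ℝ Y]
  have h1Fsa : IsSelfAdjoint ((1 : D⁺¹) - F) := (IsSelfAdjoint.one (R := D⁺¹)).sub hFsa
  have hYconj : ((1 : D⁺¹) - F) * Y * ((1 : D⁺¹) - F) = cfc (fun t => (1 - f t) ^ 2 * t) Y := by
    have step1 : cfc (fun t => 1 - f t) Y * Y = cfc (fun t => (1 - f t) * t) Y := by
      conv_rhs => rw [cfc_mul (fun t => 1 - f t) (fun t : ℝ => t) Y (by fun_prop) (by fun_prop),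
        cfc_id' ℝ Y]
    have step2 : cfc (fun t => (1 - f t) * t) Y * cfc (fun t => 1 - f t) Y =
        cfc (fun t => (1 - f t) * t * (1 - f t)) Y :=
      (cfc_mul _ _ Y (by fun_prop) (by fun_prop)).symm
    rw [h1F, step1, step2]
    exact cfc_congr fun t _ => by ring
  have bound1 : ‖cfc (fun t => (1 - f t) ^ 2 * t) Y‖ ≤ k⁻¹ := by
    refine norm_cfc_le (by positivity) fun t ht => ?_
    have ht0 := hspec t ht
    rw [Real.norm_of_nonneg (by positivity)]
    exact hkey t ht0
  have hc1 : 0 ≤ ((1 : D⁺¹) - F) * X * ((1 : D⁺¹) - F) := by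
    have := star_left_conjugate_nonneg hX0 ((1 : D⁺¹) - F)
    rwa [h1Fsa.star_eq] at this
  have hc2 : ((1 : D⁺¹) - F) * X * ((1 : D⁺¹) - F) ≤ ((1 : D⁺¹) - F) * Y * ((1 : D⁺¹) - F) := by
    have := star_left_conjugate_le_conjugate hXY ((1 : D⁺¹) - F)
    rwa [h1Fsa.star_eq] at this
  have hn1 : ‖((1 : D⁺¹) - F) * X * ((1 : D⁺¹) - F)‖ ≤ k⁻¹ := by
    refine (CStarAlgebra.norm_le_norm_of_nonneg_of_le hc1 hc2).trans ?_
    rw [hYconj]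
    exact bound1
  have hXX : X * X ≤ ‖X‖ • X := by
    obtain ⟨R, hR0, hR⟩ : ∃ R : D⁺¹, 0 ≤ R ∧ R * R = X :=
      ⟨CFC.sqrt X, CFC.sqrt_nonneg X, CFC.sqrt_mul_sqrt_self X hX0⟩
    have h₀ := CStarAlgebra.star_left_conjugate_le_norm_smul (a := R) (b := X) hXsa
    rw [(IsSelfAdjoint.of_nonneg hR0).star_eq, hR] at h₀
    calc X * X = R * X * R := by rw [← hR]; noncomm_ring
      _ ≤ ‖X‖ • X := h₀
  have hc3 : ((1 : D⁺¹) - F) * (X * X) * ((1 : D⁺¹) - F) ≤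
      ‖X‖ • (((1 : D⁺¹) - F) * X * ((1 : D⁺¹) - F)) := by
    have h := star_left_conjugate_le_conjugate hXX ((1 : D⁺¹) - F)
    rw [h1Fsa.star_eq] at h
    refine h.trans_eq ?_
    rw [mul_smul_comm, smul_mul_assoc]
  have hc4 : 0 ≤ ((1 : D⁺¹) - F) * (X * X) * ((1 : D⁺¹) - F) := by
    have h := mul_star_self_nonneg (((1 : D⁺¹) - F) * X)
    rwa [star_mul, hXsa.star_eq, h1Fsa.star_eq,
      show ((1 : D⁺¹) - F) * X * (X * ((1 : D⁺¹) - F)) =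
        ((1 : D⁺¹) - F) * (X * X) * ((1 : D⁺¹) - F) by noncomm_ring] at h
  have hn2 : ‖((1 : D⁺¹) - F) * X‖ ^ 2 ≤ ‖X‖ * k⁻¹ := by
    have e1 : ‖((1 : D⁺¹) - F) * X‖ ^ 2 =
        ‖((1 : D⁺¹) - F) * (X * X) * ((1 : D⁺¹) - F)‖ := by
      rw [sq, ← CStarRing.norm_self_mul_star (x := ((1 : D⁺¹) - F) * X)]
      congr 1
      rw [star_mul, hXsa.star_eq, h1Fsa.star_eq]
      noncomm_ring
    rw [e1]
    calc ‖((1 : D⁺¹) - F) * (X * X) * ((1 : D⁺¹) - F)‖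
        ≤ ‖‖X‖ • (((1 : D⁺¹) - F) * X * ((1 : D⁺¹) - F))‖ :=
          CStarAlgebra.norm_le_norm_of_nonneg_of_le hc4 hc3
      _ = ‖X‖ * ‖((1 : D⁺¹) - F) * X * ((1 : D⁺¹) - F)‖ := by
          rw [norm_smul, Real.norm_of_nonneg (norm_nonneg X)]
      _ ≤ ‖X‖ * k⁻¹ := mul_le_mul_of_nonneg_left hn1 (norm_nonneg X)
  have hnorm1F_X : ‖((1 : D⁺¹) - F) * X‖ ≤ Real.sqrt (‖X‖ * k⁻¹) := by
    rw [← Real.sqrt_sq (norm_nonneg (((1 : D⁺¹) - F) * X))]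
    exact Real.sqrt_le_sqrt hn2
  have hnormX_1F : ‖X * ((1 : D⁺¹) - F)‖ ≤ Real.sqrt (‖X‖ * k⁻¹) := by
    rw [← norm_star (X * ((1 : D⁺¹) - F)), star_mul, hXsa.star_eq, h1Fsa.star_eq]
    exact hnorm1F_X
  have hnF : ‖F‖ ≤ 1 := by
    rw [hF_def]
    refine norm_cfc_le one_pos.le fun t ht => ?_
    rw [Real.norm_of_nonneg (hf_nonneg t (hspec t ht))]
    exact hf_le_one t (hspec t ht)
  have hmain : ‖X - F * X * F‖ ≤ 2 * Real.sqrt (‖X‖ * k⁻¹) := by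
    have hdecomp : X - F * X * F = ((1 : D⁺¹) - F) * X + F * (X * ((1 : D⁺¹) - F)) := by
      noncomm_ring
    rw [hdecomp]
    calc ‖((1 : D⁺¹) - F) * X + F * (X * ((1 : D⁺¹) - F))‖
        ≤ ‖((1 : D⁺¹) - F) * X‖ + ‖F * (X * ((1 : D⁺¹) - F))‖ := norm_add_le _ _
      _ ≤ Real.sqrt (‖X‖ * k⁻¹) + ‖F‖ * ‖X * ((1 : D⁺¹) - F)‖ :=
          add_le_add hnorm1F_X (norm_mul_le _ _)
      _ ≤ Real.sqrt (‖X‖ * k⁻¹) + 1 * Real.sqrt (‖X‖ * k⁻¹) :=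
          add_le_add_right (mul_le_mul hnF hnormX_1F (norm_nonneg _) zero_le_one) _
      _ = 2 * Real.sqrt (‖X‖ * k⁻¹) := by ring
  have hpt : y * (cfcₙ g y * y * x * y * cfcₙ g y) * y =
      (y * cfcₙ g y * y) * x * (y * cfcₙ g y * y) := by
    simp only [mul_assoc]
  refine ⟨y * (cfcₙ g y * y * x * y * cfcₙ g y) * y, ⟨_, rfl⟩, ?_⟩
  rw [dist_eq_norm]
  have hXnorm : ‖X‖ = ‖x‖ := Unitization.norm_inr x
  have htrans : ‖x - y * (cfcₙ g y * y * x * y * cfcₙ g y) * y‖ ≤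
      2 * Real.sqrt (‖x‖ * k⁻¹) := by
    have hcast : ((x - y * (cfcₙ g y * y * x * y * cfcₙ g y) * y : D) : D⁺¹) = X - F * X * F := by
      rw [Unitization.inr_sub, hpt, Unitization.inr_mul, Unitization.inr_mul, hE]
    rw [← Unitization.norm_inr (𝕜 := ℂ) (x - y * (cfcₙ g y * y * x * y * cfcₙ g y) * y), hcast]
    rw [← hXnorm]
    exact hmain
  exact htrans.trans_lt hkε

end CornerProofAux

open CornerProofAux

set_option maxHeartbeats 2000000 in
set_option synthInstance.maxHeartbeats 400000 in
/-- Let `D` be a C*-algebra and `e` a projection in the multiplier algebra `M(D)`.  Let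
`D_e = {a ∈ D : e a e = a}` be the corner of `D` determined by `e`, and assume that the corner
is full (the smallest closed two-sided ideal of `D` containing `D_e` is `D`).  If `D` contains
a nonzero commutative hereditary C*-subalgebra, then `D_e` contains a nonzero commutative
hereditary C*-subalgebra of `D`. -/
theorem corner_contains_comm_hereditary
    {D : Type*} [NonUnitalCStarAlgebra D] [PartialOrder D] [StarOrderedRing D]
    (e : 𝓜(ℂ, D)) (he₁ : star e = e) (he₂ : e * e = e)
    (corner : Set D) (hcorner : corner = {a : D | e * (a : 𝓜(ℂ, D)) * e = (a : 𝓜(ℂ, D))})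
    (hfull : ∀ I : TwoSidedIdeal D, IsClosed (I : Set D) → corner ⊆ (I : Set D) → I = ⊤)
    (hD : ∃ B : NonUnitalStarSubalgebra ℂ D, IsHereditarySubalgebra B ∧
      (∃ x ∈ B, x ≠ 0) ∧ ∀ x ∈ B, ∀ y ∈ B, x * y = y * x) :
    ∃ B : NonUnitalStarSubalgebra ℂ D, IsHereditarySubalgebra B ∧ (B : Set D) ⊆ corner ∧
      (∃ x ∈ B, x ≠ 0) ∧ ∀ x ∈ B, ∀ y ∈ B, x * y = y * x := by
  obtain ⟨B, hB, ⟨x₀, hx₀B, hx₀⟩, hBcomm⟩ := hD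
  obtain ⟨b, hbB, hb0, hbne⟩ : ∃ b : D, b ∈ B ∧ (0 : D) ≤ b ∧ b ≠ 0 := by
    refine ⟨star x₀ * x₀, mul_mem (star_mem hx₀B) hx₀B, star_mul_self_nonneg x₀, ?_⟩
    rw [Ne, CStarRing.star_mul_self_eq_zero_iff]
    exact hx₀
  have hbsa : IsSelfAdjoint b := IsSelfAdjoint.of_nonneg hb0
  have hbsa' : star (b : 𝓜(ℂ, D)) = (b : 𝓜(ℂ, D)) := by
    rw [← coe_star, hbsa.star_eq]
  -- Step 1: use fullness to find `s` with `e * (s * b²) ≠ 0`.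
  have hex : ∃ s : D, e * ((s * (b * b) : D) : 𝓜(ℂ, D)) ≠ 0 := by
    by_contra hcon
    push_neg at hcon
    set I : TwoSidedIdeal D := TwoSidedIdeal.mk'
      {x : D | x * (b * (b * b)) = 0 ∧ ∀ d : D, x * (d * (b * (b * b))) = 0}
      ⟨zero_mul _, fun d => zero_mul _⟩
      (fun {u v} hu hv => ⟨by rw [add_mul, hu.1, hv.1, add_zero],
        fun d => by rw [add_mul, hu.2 d, hv.2 d, add_zero]⟩)
      (fun {u} hu => ⟨by rw [neg_mul, hu.1, neg_zero],
        fun d => by rw [neg_mul, hu.2 d, neg_zero]⟩)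
      (fun {u v} hv => ⟨by rw [mul_assoc, hv.1, mul_zero],
        fun d => by rw [mul_assoc, hv.2 d, mul_zero]⟩)
      (fun {u v} hu => ⟨by rw [mul_assoc]; exact hu.2 v,
        fun d => by
          rw [mul_assoc, show v * (d * (b * (b * b))) = (v * d) * (b * (b * b)) by
            simp only [mul_assoc]]
          exact hu.2 (v * d)⟩)
      with hI
    have hIcoe : (I : Set D) =
        {x : D | x * (b * (b * b)) = 0 ∧ ∀ d : D, x * (d * (b * (b * b))) = 0} := by
      rw [hI]; exact TwoSidedIdeal.coe_mk' _ _ _ _ _ _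
    have hIclosed : IsClosed (I : Set D) := by
      rw [hIcoe]
      have heq : {x : D | x * (b * (b * b)) = 0 ∧ ∀ d : D, x * (d * (b * (b * b))) = 0} =
          {x : D | x * (b * (b * b)) = 0} ∩ ⋂ d : D, {x : D | x * (d * (b * (b * b))) = 0} := by
        ext t
        simp [Set.mem_iInter]
      rw [heq]
      refine IsClosed.inter ?_ (isClosed_iInter fun d => ?_)
      · exact isClosed_eq (continuous_mul_right _) continuous_const
      · exact isClosed_eq (continuous_mul_right _) continuous_const
    have hsub : corner ⊆ (I : Set D) := by
      intro c hc
      have hc' : e * (c : 𝓜(ℂ, D)) * e = (c : 𝓜(ℂ, D)) := by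
        rw [hcorner] at hc
        exact hc
      rw [hIcoe]
      refine ⟨?_, ?_⟩
      · apply coe_injective
        rw [coe_zero, coe_mul, ← hc',
          mul_assoc (e * (c : 𝓜(ℂ, D))) e ((b * (b * b) : D) : 𝓜(ℂ, D)),
          show ((b * (b * b) : D) : 𝓜(ℂ, D)) = ((b * (b * b) : D) : 𝓜(ℂ, D)) from rfl,
          hcon b, mul_zero]
      · intro d
        apply coe_injective
        rw [coe_zero, show d * (b * (b * b)) = (d * b) * (b * b) by simp only [mul_assoc],
          coe_mul, ← hc',
          mul_assoc (e * (c : 𝓜(ℂ, D))) e (((d * b) * (b * b) : D) : 𝓜(ℂ, D)),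
          hcon (d * b), mul_zero]
    have hIT : I = ⊤ := hfull I hIclosed hsub
    have hbI' : b ∈ I := by
      rw [hIT]
      exact TwoSidedIdeal.mem_top D
    have hbI : b ∈ (I : Set D) := SetLike.mem_coe.mpr hbI'
    rw [hIcoe] at hbI
    have hb4 : (b * b) * (b * b) = 0 := by
      have h := hbI.1
      calc (b * b) * (b * b) = b * (b * (b * b)) := by simp only [mul_assoc]
        _ = 0 := h
    have hbb0 : b * b = 0 := by
      have h1 : ‖b * b‖ * ‖b * b‖ = 0 := by
        rw [← CStarRing.norm_star_mul_self (x := b * b), star_mul, hbsa.star_eq, hb4, norm_zero]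
      exact norm_eq_zero.mp (mul_self_eq_zero.mp h1)
    have h2 : ‖b‖ * ‖b‖ = 0 := by
      rw [← CStarRing.norm_star_mul_self (x := b), hbsa.star_eq, hbb0, norm_zero]
    exact hbne (norm_eq_zero.mp (mul_self_eq_zero.mp h2))
  obtain ⟨s, hs⟩ := hex
  -- Step 2: the element `w`.
  obtain ⟨w, hw_coe⟩ : ∃ w : D, (w : 𝓜(ℂ, D)) = e * ((s * b : D) : 𝓜(ℂ, D)) :=
    ⟨e.fst (s * b), (mul_coe e (s * b)).symm⟩
  obtain ⟨v, hv_coe⟩ : ∃ v : D, (v : 𝓜(ℂ, D)) = e * ((s : D) : 𝓜(ℂ, D)) :=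
    ⟨e.fst s, (mul_coe e s).symm⟩
  have he_w : e * (w : 𝓜(ℂ, D)) = (w : 𝓜(ℂ, D)) := by
    rw [hw_coe, ← mul_assoc, he₂]
  have hwb : w * b ≠ 0 := by
    intro h0
    apply hs
    have h1 : ((w * b : D) : 𝓜(ℂ, D)) = e * ((s * (b * b) : D) : 𝓜(ℂ, D)) := by
      rw [coe_mul, hw_coe, mul_assoc, ← coe_mul, mul_assoc s b b]
    rw [← h1, h0, coe_zero]
  -- `star w * w ∈ B`.
  have hsww_eq : star w * w = b * (star s * v) * b := by
    apply coe_injective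
    simp only [coe_mul, coe_star]
    rw [hw_coe, hv_coe, coe_mul]
    rw [star_mul, star_mul, he₁, hbsa']
    simp only [mul_assoc]
    rw [← mul_assoc e e, he₂]
  have hm_sa : IsSelfAdjoint (star s * v) := by
    have : star (star s * v) = star s * v := by
      apply coe_injective
      simp only [coe_mul, coe_star, star_mul, star_star]
      rw [hv_coe, star_mul, he₁, mul_assoc]
    exact this
  have hsww_mem : star w * w ∈ B := by
    have hbb : b * b ∈ B := mul_mem hbB hbB
    have hle : star w * w ≤ ‖star s * v‖ • (b * b) := by
      rw [hsww_eq]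
      have := CStarAlgebra.star_left_conjugate_le_norm_smul (a := b) (b := star s * v) hm_sa
      rwa [hbsa.star_eq] at this
    exact hB.2 (real_smul_mem B hbb _) (hsww_eq ▸ star_mul_self_nonneg w) hle
  obtain ⟨u, hu_def, hu_mem⟩ : ∃ u : D, u = star w * w ∧ u ∈ B :=
    ⟨star w * w, rfl, hsww_mem⟩
  -- Step 3: the subalgebra `B₀` and its closure.
  set S : Set D := (fun c => w * c * star w) '' (B : Set D) with hS_def
  have hSmem : ∀ {t : D}, t ∈ S ↔ ∃ c ∈ B, w * c * star w = t := by
    intro t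
    constructor
    · rintro ⟨c, hc, rfl⟩
      exact ⟨c, hc, rfl⟩
    · rintro ⟨c, hc, rfl⟩
      exact ⟨c, hc, rfl⟩
  let B₀ : NonUnitalStarSubalgebra ℂ D :=
    { carrier := S
      add_mem' := by
        rintro a₁ a₂ ⟨c₁, hc₁, rfl⟩ ⟨c₂, hc₂, rfl⟩
        exact ⟨c₁ + c₂, add_mem hc₁ hc₂, by noncomm_ring⟩
      zero_mem' := ⟨0, ZeroMemClass.zero_mem B, by simp⟩
      mul_mem' := by
        rintro a₁ a₂ ⟨c₁, hc₁, rfl⟩ ⟨c₂, hc₂, rfl⟩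
        refine ⟨c₁ * u * c₂, mul_mem (mul_mem hc₁ hu_mem) hc₂, ?_⟩
        rw [hu_def]
        simp only [mul_assoc]
      smul_mem' := by
        rintro r a ⟨c, hc, rfl⟩
        refine ⟨r • c, SMulMemClass.smul_mem r hc, ?_⟩
        show w * (r • c) * star w = r • (w * c * star w)
        rw [mul_smul_comm, smul_mul_assoc]
      star_mem' := by
        rintro a ⟨c, hc, rfl⟩
        refine ⟨star c, star_mem hc, ?_⟩
        simp only [star_mul, star_star, mul_assoc] }
  have hB₀coe : (B₀ : Set D) = S := rfl
  set B' : NonUnitalStarSubalgebra ℂ D := B₀.topologicalClosure with hB'_def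
  have hB'coe : (B' : Set D) = closure S := rfl
  have hB'closed : IsClosed (B' : Set D) := by
    rw [hB'coe]; exact isClosed_closure
  -- hereditariness of B'
  have hB'her : ∀ ⦃a b' : D⦄, b' ∈ closure S → 0 ≤ a → a ≤ b' → a ∈ closure S := by
    intro a b' hb' ha0 hab
    have hb'sa : IsSelfAdjoint b' := IsSelfAdjoint.of_nonneg (ha0.trans hab)
    have hsubset : {t : D | ∃ z : D, t = b' * z * b'} ⊆ closure S := by
      rintro t ⟨z, rfl⟩
      have hψc : Continuous (fun v : D => v * z * star v) :=
        ((continuous_id.mul continuous_const).mul continuous_star)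
      have hψS : (fun v : D => v * z * star v) '' S ⊆ S := by
        rintro t ⟨v, hv, rfl⟩
        obtain ⟨c, hc, rfl⟩ := hv
        refine ⟨c * (star w * z * w) * star c, ?_, ?_⟩
        · have := conj_mem hB (star_mem hc) (star w * z * w)
          rwa [star_star] at this
        · simp only [star_mul, star_star, mul_assoc]
      have himg : (fun v : D => v * z * star v) '' closure S ⊆ closure S :=
        (image_closure_subset_closure_image hψc).trans (closure_mono hψS)
      have : b' * z * star b' ∈ closure S := himg ⟨b', hb', rfl⟩
      rwa [hb'sa.star_eq] at this
    have h1 := mem_closure_conj ha0 hab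
    have h2 := closure_mono hsubset h1
    rwa [closure_closure] at h2
  -- the nonzero element
  have hne : ∃ t ∈ closure S, t ≠ 0 := by
    refine ⟨w * (b * b) * star w, subset_closure ⟨b * b, mul_mem hbB hbB, rfl⟩, ?_⟩
    intro h0
    apply hwb
    have heq : w * (b * b) * star w = (w * b) * star (w * b) := by
      rw [star_mul, hbsa.star_eq]
      simp only [mul_assoc]
    rw [heq] at h0
    exact (CStarRing.mul_star_self_eq_zero_iff (w * b)).mp h0
  -- commutativity
  have hScomm : ∀ t₁ ∈ S, ∀ t₂ ∈ S, t₁ * t₂ = t₂ * t₁ := by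
    rintro t₁ ⟨c₁, hc₁, rfl⟩ t₂ ⟨c₂, hc₂, rfl⟩
    have key : ∀ d₁ ∈ B, ∀ d₂ ∈ B,
        (w * d₁ * star w) * (w * d₂ * star w) = w * (d₁ * u * d₂) * star w := by
      intro d₁ _ d₂ _
      rw [hu_def]
      simp only [mul_assoc]
    rw [key c₁ hc₁ c₂ hc₂, key c₂ hc₂ c₁ hc₁]
    have : c₁ * u * c₂ = c₂ * u * c₁ := by
      have h1 : c₁ * (u * c₂) = (u * c₂) * c₁ := hBcomm _ hc₁ _ (mul_mem hu_mem hc₂)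
      have h2 : c₂ * (u * c₁) = (u * c₁) * c₂ := hBcomm _ hc₂ _ (mul_mem hu_mem hc₁)
      calc c₁ * u * c₂ = c₁ * (u * c₂) := by rw [mul_assoc]
        _ = u * c₂ * c₁ := h1
        _ = u * (c₂ * c₁) := by rw [mul_assoc]
        _ = u * (c₁ * c₂) := by rw [hBcomm _ hc₂ _ hc₁]
        _ = u * c₁ * c₂ := by rw [mul_assoc]
        _ = c₂ * (u * c₁) := h2.symm
        _ = c₂ * u * c₁ := by rw [mul_assoc]
    rw [this]
  have hclcomm : ∀ t₁ ∈ closure S, ∀ t₂ ∈ closure S, t₁ * t₂ = t₂ * t₁ := by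
    have comm1 : ∀ t₂ ∈ S, ∀ t₁ ∈ closure S, t₁ * t₂ = t₂ * t₁ := by
      intro t₂ ht₂
      have hcl : closure S ⊆ {t : D | t * t₂ = t₂ * t} :=
        closure_minimal (fun t ht => hScomm t ht t₂ ht₂)
          (isClosed_eq (continuous_mul_right t₂) (continuous_mul_left t₂))
      exact fun t₁ ht₁ => hcl ht₁
    intro t₁ ht₁ t₂ ht₂
    have hcl : closure S ⊆ {t : D | t₁ * t = t * t₁} :=
      closure_minimal (fun t ht => comm1 t ht t₁ ht₁)
        (isClosed_eq (continuous_mul_left t₁) (continuous_mul_right t₁))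
    exact hcl ht₂
  -- B' ⊆ corner
  have hcorner_closed : IsClosed corner := by
    rw [hcorner]
    exact isClosed_eq (((continuous_const.mul continuous_coe).mul continuous_const))
      continuous_coe
  have hS_corner : S ⊆ corner := by
    rintro t ⟨c, hc, rfl⟩
    rw [hcorner]
    show e * ((w * c * star w : D) : 𝓜(ℂ, D)) * e = ((w * c * star w : D) : 𝓜(ℂ, D))
    have hsw_e : star (w : 𝓜(ℂ, D)) * e = star (w : 𝓜(ℂ, D)) := by
      conv_lhs => rw [← he₁, ← star_mul, he_w]
    rw [coe_mul, coe_mul, coe_star]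
    calc e * ((w : 𝓜(ℂ, D)) * (c : 𝓜(ℂ, D)) * star (w : 𝓜(ℂ, D))) * e
        = (e * (w : 𝓜(ℂ, D))) * ((c : 𝓜(ℂ, D)) * (star (w : 𝓜(ℂ, D)) * e)) := by
          simp only [mul_assoc]
      _ = (w : 𝓜(ℂ, D)) * (c : 𝓜(ℂ, D)) * star (w : 𝓜(ℂ, D)) := by
          rw [he_w, hsw_e]
          simp only [mul_assoc]
  have hB'_corner : (B' : Set D) ⊆ corner := by
    rw [hB'coe]
    exact closure_minimal hS_corner hcorner_closed
  refine ⟨B', ⟨hB'closed, ?_⟩, hB'_corner, ?_, ?_⟩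
  · intro a b' hb' ha0 hab
    exact hB'her hb' ha0 hab
  · exact hne
  · intro t₁ h₁ t₂ h₂
    exact hclcomm t₁ h₁ t₂ h₂
end

section
/- Let B be a C*-algebra, z a positive element of B, and τ : B → ℂ a continuous linear functional which is positive (τ maps positive elements to nonnegative reals) and tracial (τ(ab) = τ(ba) for all a, b ∈ B). Suppose there is a sequence (x_k) in the C*-algebra M₂(B) of 2×2 matrices over B such that ‖x_k* · diag(z, 0) · x_k − diag(z, z)‖ → 0 as k → ∞ (i.e. diag(z,z) is Cuntz subequivalent to diag(z,0) in M₂(B)). Then τ(z) = 0. -/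
open Filter Topology
open scoped ComplexOrder

attribute [local instance] Matrix.normedAddCommGroup


lemma aux_family {B : Type*} [NonUnitalCStarAlgebra B] (z : B)
    (key : ∀ δ : ℝ, 0 < δ → ∃ a b : B,
      ‖star a * z * a - z‖ ≤ δ ∧ ‖star b * z * b - z‖ ≤ δ ∧
      ‖star a * z * b‖ ≤ δ ∧ ‖star b * z * a‖ ≤ δ) :
    ∀ n : ℕ, ∀ ε : ℝ, 0 < ε → ∃ y : Fin (2^n) → B,
      ∀ i j, ‖star (y i) * z * y j - (if i = j then z else 0)‖ ≤ ε := by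
  intro n
  induction n with
  | zero =>
    intro ε hε
    obtain ⟨a, b, ha, -, -, -⟩ := key ε hε
    refine ⟨fun _ => a, fun i j => ?_⟩
    have : i = j := by
      have hi := i.isLt; have hj := j.isLt
      simp only [pow_zero] at hi hj
      exact Fin.ext (by omega)
    simpa [this] using ha
  | succ n IH =>
    intro ε hε
    obtain ⟨y, hy⟩ := IH (ε/2) (by positivity)
    set M : ℝ := 1 + ∑ i, ‖y i‖ with hMdef
    have hM1 : 1 ≤ M := by
      have : (0:ℝ) ≤ ∑ i, ‖y i‖ := Finset.sum_nonneg fun i _ => norm_nonneg _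
      simp [hMdef]; linarith
    have hM0 : 0 < M := lt_of_lt_of_le one_pos hM1
    have hyM : ∀ i, ‖y i‖ ≤ M := by
      intro i
      have h1 : ‖y i‖ ≤ ∑ i, ‖y i‖ :=
        Finset.single_le_sum (f := fun i => ‖y i‖) (fun i _ => norm_nonneg _) (Finset.mem_univ i)
      linarith
    set δ : ℝ := ε / (2 * M^2) with hδdef
    have hδ : 0 < δ := by positivity
    obtain ⟨a, b, ha, hb, hab, hba⟩ := key δ hδ
    have hlt : ∀ i : Fin (2^(n+1)), (i : ℕ) % 2^n < 2^n := fun i => Nat.mod_lt _ (by positivity)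
    refine ⟨fun i => (if (i : ℕ) < 2^n then a else b) * y ⟨(i : ℕ) % 2^n, hlt i⟩, fun i j => ?_⟩
    set i0 : Fin (2^n) := ⟨(i : ℕ) % 2^n, hlt i⟩ with hi0
    set j0 : Fin (2^n) := ⟨(j : ℕ) % 2^n, hlt j⟩ with hj0
    -- general estimate
    have est : ∀ (p q r : B) (c : ℝ), 0 ≤ c → ‖q‖ ≤ c → ‖p‖ ≤ M → ‖r‖ ≤ M →
        ‖p * q * r‖ ≤ M^2 * c := by
      intro p q r c hc hq hp hr
      calc ‖p * q * r‖ ≤ ‖p * q‖ * ‖r‖ := norm_mul_le _ _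
        _ ≤ ‖p‖ * ‖q‖ * ‖r‖ := by
            gcongr; exacts [norm_mul_le _ _]
        _ ≤ M * c * M := by
            apply mul_le_mul (mul_le_mul hp hq (norm_nonneg _) (hM0.le)) hr (norm_nonneg _)
            positivity
        _ = M^2 * c := by ring
    have hMδ : M^2 * δ = ε / 2 := by
      field_simp [hδdef]
      rw [hδdef]; field_simp
    -- same-branch estimate
    have main : ∀ c : B, ‖star c * z * c - z‖ ≤ δ →
        ‖star (y i0) * (star c * z * c) * y j0 - (if i0 = j0 then z else 0)‖ ≤ ε := by
      intro c hc
      have hsplit : star (y i0) * (star c * z * c) * y j0 - (if i0 = j0 then z else 0)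
          = star (y i0) * (star c * z * c - z) * y j0
            + (star (y i0) * z * y j0 - (if i0 = j0 then z else 0)) := by
        rw [mul_sub, sub_mul]; abel
      rw [hsplit]
      calc _ ≤ ‖star (y i0) * (star c * z * c - z) * y j0‖
            + ‖star (y i0) * z * y j0 - (if i0 = j0 then z else 0)‖ := norm_add_le _ _
        _ ≤ M^2 * δ + ε/2 := by
            gcongr
            · exact est _ _ _ δ hδ.le hc (by simpa using hyM i0) (hyM j0)
            · exact hy i0 j0
        _ = ε := by rw [hMδ]; ring
    -- cross-branch estimate
    have cross : ∀ c d : B, ‖star c * z * d‖ ≤ δ →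
        ‖star (y i0) * (star c * z * d) * y j0‖ ≤ ε := by
      intro c d hcd
      calc ‖star (y i0) * (star c * z * d) * y j0‖ ≤ M^2 * δ :=
            est _ _ _ δ hδ.le hcd (by simpa using hyM i0) (hyM j0)
        _ = ε/2 := hMδ
        _ ≤ ε := by linarith
    have hexpand : ∀ c d : B,
        star (c * y i0) * z * (d * y j0) = star (y i0) * (star c * z * d) * y j0 := by
      intro c d
      simp only [star_mul, mul_assoc]
    by_cases hbi : (i : ℕ) < 2^n <;> by_cases hbj : (j : ℕ) < 2^n
    · -- both a
      have hij : (i = j) = (i0 = j0) := by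
        simp only [Fin.ext_iff, hi0, hj0, Fin.val_mk]
        exact propext (by rw [Nat.mod_eq_of_lt hbi, Nat.mod_eq_of_lt hbj])
      simp only [hbi, hbj, if_true, hexpand, hij]
      have h := main a ha; rw [← hexpand] at h; exact h
    · -- i uses a, j uses b : i ≠ j
      have hij : i ≠ j := by
        intro h; subst h; exact hbj hbi
      simp only [hbi, hbj, if_true, if_false, hexpand, hij, sub_zero]
      have h := cross a b hab; rw [← hexpand] at h; exact h
    · have hij : i ≠ j := by
        intro h; subst h; exact hbi hbj
      simp only [hbi, hbj, if_true, if_false, hexpand, hij, sub_zero]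
      have h := cross b a hba; rw [← hexpand] at h; exact h
    · have e2 : (2:ℕ)^(n+1) = 2^n + 2^n := by ring
      have hi2 : (i : ℕ) < 2^n + 2^n := e2 ▸ i.isLt
      have hj2 : (j : ℕ) < 2^n + 2^n := e2 ▸ j.isLt
      have hmi : (i : ℕ) % 2^n = (i : ℕ) - 2^n := by
        rw [Nat.mod_eq_sub_mod (le_of_not_gt hbi)]
        exact Nat.mod_eq_of_lt (by omega)
      have hmj : (j : ℕ) % 2^n = (j : ℕ) - 2^n := by
        rw [Nat.mod_eq_sub_mod (le_of_not_gt hbj)]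
        exact Nat.mod_eq_of_lt (by omega)
      have hij : (i = j) = (i0 = j0) := by
        simp only [Fin.ext_iff, hi0, hj0, Fin.val_mk]
        exact propext (by rw [hmi, hmj]; omega)
      simp only [hbi, hbj, if_false, hexpand, hij]
      have h := main b hb; rw [← hexpand] at h; exact h


lemma aux_bound {B : Type*} [NonUnitalCStarAlgebra B] [PartialOrder B] [StarOrderedRing B]
    (z : B) (hz : 0 ≤ z) (τ : B →L[ℂ] ℂ)
    (hτtr : ∀ a b : B, τ (a * b) = τ (b * a))
    {N : ℕ} (ε : ℝ) (hε : 0 < ε)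
    (y : Fin N → B)
    (hy : ∀ i j, ‖star (y i) * z * y j - (if i = j then z else 0)‖ ≤ ε) :
    (N : ℝ) * (τ z).re ≤ ‖τ‖ * (‖z‖ + ε + (N : ℝ)^2 * ε) + (N : ℝ) * (‖τ‖ * ε) := by
  set s : B := CFC.sqrt z with hsdef
  have hs : s * s = z := CFC.sqrt_mul_sqrt_self z hz
  have hsstar : star s = s := (IsSelfAdjoint.of_nonneg (CFC.sqrt_nonneg z)).star_eq
  set u : Fin N → B := fun i => s * y i with hudef
  have hstaru : ∀ i j, star (u i) * u j = star (y i) * z * y j := by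
    intro i j
    show star (s * y i) * (s * y j) = _
    rw [star_mul, hsstar, mul_assoc (star (y i)) s, ← mul_assoc s s, hs, ← mul_assoc]
  have hyy : ∀ i j, ‖star (u i) * u j - (if i = j then z else 0)‖ ≤ ε := by
    intro i j; rw [hstaru]; exact hy i j
  have hdiag : ∀ i, ‖star (u i) * u i - z‖ ≤ ε := by
    intro i; simpa using hyy i i
  have hcross : ∀ i j, i ≠ j → ‖star (u i) * u j‖ ≤ ε := by
    intro i j hij; simpa [hij] using hyy i j
  have hsz : (0:ℝ) < ‖z‖ + ε := by positivity
  -- norm bounds on u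
  have hnn : ∀ i, ‖star (u i) * u i‖ ≤ ‖z‖ + ε := by
    intro i
    have h1 := norm_sub_norm_le (star (u i) * u i) z
    have h2 := hdiag i
    linarith
  have hun : ∀ i, ‖u i‖ ≤ Real.sqrt (‖z‖ + ε) := by
    intro i
    have h1 : ‖u i‖ * ‖u i‖ ≤ ‖z‖ + ε := by
      rw [← CStarRing.norm_star_mul_self]; exact hnn i
    have h2 := Real.sqrt_le_sqrt h1
    rwa [Real.sqrt_mul_self (norm_nonneg _)] at h2
  have hqq : Real.sqrt (‖z‖ + ε) * Real.sqrt (‖z‖ + ε) = ‖z‖ + ε :=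
    Real.mul_self_sqrt hsz.le
  set V : B := ∑ i, u i * star (u i) with hVdef
  have hV0 : 0 ≤ V := Finset.sum_nonneg fun i _ => mul_star_self_nonneg (u i)
  -- lower bound on re (τ V)
  have hτV : τ V = ∑ i, τ (star (y i) * z * y i) := by
    rw [hVdef, map_sum]
    congr 1; ext i
    rw [hτtr, hstaru]
  have hlow : (N : ℝ) * ((τ z).re - ‖τ‖ * ε) ≤ (τ V).re := by
    rw [hτV, Complex.re_sum]
    have : ∀ i ∈ Finset.univ, (τ z).re - ‖τ‖ * ε ≤ (τ (star (y i) * z * y i)).re := by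
      intro i _
      have hnb : ‖τ (star (y i) * z * y i - z)‖ ≤ ‖τ‖ * ε := by
        calc ‖τ (star (y i) * z * y i - z)‖ ≤ ‖τ‖ * ‖star (y i) * z * y i - z‖ :=
              τ.le_opNorm _
          _ ≤ ‖τ‖ * ε := mul_le_mul_of_nonneg_left (by simpa using hy i i) (norm_nonneg τ)
      have hre : |(τ (star (y i) * z * y i - z)).re| ≤ ‖τ‖ * ε := by
        refine le_trans ?_ hnb
        exact Complex.abs_re_le_norm _
      rw [map_sub] at hre
      have := (abs_le.mp hre).1
      simp only [Complex.sub_re] at this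
      linarith
    calc (N : ℝ) * ((τ z).re - ‖τ‖ * ε) = ∑ _i : Fin N, ((τ z).re - ‖τ‖ * ε) := by
          simp [Finset.sum_const, Finset.card_univ, mul_comm]; ring
      _ ≤ _ := Finset.sum_le_sum this
  -- upper bound on ‖V‖
  have hVnorm : ‖V‖ ≤ ‖z‖ + ε + (N : ℝ)^2 * ε := by
    set g : Fin N → Fin N → B := fun i j => u i * (star (u i) * u j) * star (u j) with hgdef
    have hVV : V * V = ∑ i, ∑ j, g i j := by
      rw [hVdef, Finset.sum_mul_sum]
      congr 1; ext i; congr 1; ext j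
      simp only [hgdef, mul_assoc]
    set D : B := ∑ i, g i i with hDdef
    set E : B := ∑ i, ∑ j ∈ Finset.univ.erase i, g i j with hEdef
    have hsplit : V * V = D + E := by
      rw [hVV, hDdef, hEdef, ← Finset.sum_add_distrib]
      congr 1; ext i
      exact (Finset.add_sum_erase _ _ (Finset.mem_univ i)).symm
    have hD0 : 0 ≤ D := by
      refine Finset.sum_nonneg fun i _ => ?_
      have : g i i = star (u i * star (u i)) * (u i * star (u i)) := by
        simp only [hgdef, star_mul, star_star, mul_assoc]
      rw [this]
      exact star_mul_self_nonneg _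
    have hDle : D ≤ (‖z‖ + ε) • V := by
      rw [hVdef, Finset.smul_sum]
      refine Finset.sum_le_sum fun i _ => ?_
      calc g i i ≤ ‖star (u i) * u i‖ • (u i * star (u i)) :=
            CStarAlgebra.star_right_conjugate_le_norm_smul (IsSelfAdjoint.star_mul_self (u i))
        _ ≤ (‖z‖ + ε) • (u i * star (u i)) :=
            smul_le_smul_of_nonneg_right (hnn i) (mul_star_self_nonneg _)
    have hDnorm : ‖D‖ ≤ (‖z‖ + ε) * ‖V‖ := by
      calc ‖D‖ ≤ ‖(‖z‖ + ε) • V‖ := CStarAlgebra.norm_le_norm_of_nonneg_of_le hD0 hDle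
        _ = (‖z‖ + ε) * ‖V‖ := by
            rw [norm_smul, Real.norm_of_nonneg hsz.le]
    have hterm : ∀ i j : Fin N, i ≠ j → ‖g i j‖ ≤ ε * (‖z‖ + ε) := by
      intro i j hij
      calc ‖g i j‖ ≤ ‖u i * (star (u i) * u j)‖ * ‖star (u j)‖ := norm_mul_le _ _
        _ ≤ ‖u i‖ * ‖star (u i) * u j‖ * ‖star (u j)‖ := by
            gcongr; exact norm_mul_le _ _
        _ ≤ Real.sqrt (‖z‖ + ε) * ε * Real.sqrt (‖z‖ + ε) := by
            rw [norm_star]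
            apply mul_le_mul (mul_le_mul (hun i) (hcross i j hij) (norm_nonneg _)
              (Real.sqrt_nonneg _)) (hun j) (norm_nonneg _)
            positivity
        _ = ε * (‖z‖ + ε) := by rw [mul_comm (Real.sqrt (‖z‖+ε)) ε, mul_assoc, hqq]
    have hEnorm : ‖E‖ ≤ (N : ℝ) * ((N : ℝ) * (ε * (‖z‖ + ε))) := by
      calc ‖E‖ ≤ ∑ i, ‖∑ j ∈ Finset.univ.erase i, g i j‖ := norm_sum_le _ _
        _ ≤ ∑ _i : Fin N, ((N : ℝ) * (ε * (‖z‖ + ε))) := by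
            refine Finset.sum_le_sum fun i _ => ?_
            calc ‖∑ j ∈ Finset.univ.erase i, g i j‖
                ≤ ∑ j ∈ Finset.univ.erase i, ‖g i j‖ := norm_sum_le _ _
              _ ≤ ∑ _j ∈ Finset.univ.erase i, (ε * (‖z‖ + ε)) := by
                  refine Finset.sum_le_sum fun j hj => ?_
                  exact hterm i j (Finset.ne_of_mem_erase hj).symm
              _ = ((Finset.univ.erase i).card : ℝ) * (ε * (‖z‖ + ε)) := by
                  rw [Finset.sum_const, nsmul_eq_mul]
              _ ≤ (N : ℝ) * (ε * (‖z‖ + ε)) := by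
                  have hc : ((Finset.univ.erase i).card : ℝ) ≤ (N : ℝ) := by
                    exact_mod_cast le_trans Finset.card_erase_le (by simp)
                  exact mul_le_mul_of_nonneg_right hc (by positivity)
        _ = (N : ℝ) * ((N : ℝ) * (ε * (‖z‖ + ε))) := by
            rw [Finset.sum_const, Finset.card_univ, Fintype.card_fin, nsmul_eq_mul]
    have hsa : star V = V := (IsSelfAdjoint.of_nonneg hV0).star_eq
    have hnormVV : ‖V‖ * ‖V‖ = ‖V * V‖ := by
      calc ‖V‖ * ‖V‖ = ‖star V * V‖ := CStarRing.norm_star_mul_self.symm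
        _ = ‖V * V‖ := by rw [hsa]
    have hkey : ‖V‖ * ‖V‖ ≤ (‖z‖ + ε) * ‖V‖ + (N : ℝ) * ((N : ℝ) * (ε * (‖z‖ + ε))) := by
      rw [hnormVV, hsplit]
      calc ‖D + E‖ ≤ ‖D‖ + ‖E‖ := norm_add_le _ _
        _ ≤ _ := add_le_add hDnorm hEnorm
    nlinarith [hkey, norm_nonneg V, hsz.le, hsz,
      mul_nonneg (sq_nonneg (N:ℝ)) hε.le]
  -- combine
  have hup : (τ V).re ≤ ‖τ‖ * ‖V‖ := by
    calc (τ V).re ≤ ‖τ V‖ := Complex.re_le_norm _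
      _ = ‖τ V‖ := rfl
      _ ≤ ‖τ‖ * ‖V‖ := τ.le_opNorm _
  have hτ0 : (0:ℝ) ≤ ‖τ‖ := norm_nonneg _
  have : ‖τ‖ * ‖V‖ ≤ ‖τ‖ * (‖z‖ + ε + (N : ℝ)^2 * ε) := by gcongr
  linarith [hlow, hup, this]

/-- Let `B` be a C*-algebra, `z ∈ B` positive, and `τ : B → ℂ` a continuous positive tracial
linear functional.  If the diagonal matrix `diag(z, z)` is Cuntz subequivalent to `diag(z, 0)`
in `M₂(B)`, i.e. there is a sequence `(x k)` in `M₂(B)` with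
`‖(x k)* ⬝ diag(z, 0) ⬝ (x k) − diag(z, z)‖ → 0`, then `τ z = 0`. -/

theorem trace_eq_zero_of_diag_cuntz_subequiv
    {B : Type*} [NonUnitalCStarAlgebra B] [PartialOrder B] [StarOrderedRing B]
    (z : B) (hz : 0 ≤ z) (τ : B →L[ℂ] ℂ)
    (hτpos : ∀ b : B, 0 ≤ b → 0 ≤ τ b)
    (hτtr : ∀ a b : B, τ (a * b) = τ (b * a))
    (x : ℕ → Matrix (Fin 2) (Fin 2) B)
    (hx : Tendsto
      (fun k => ‖star (x k) * Matrix.diagonal ![z, 0] * x k - Matrix.diagonal ![z, z]‖)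
      atTop (nhds 0)) :
    τ z = 0 := by
  have key : ∀ δ : ℝ, 0 < δ → ∃ a b : B,
      ‖star a * z * a - z‖ ≤ δ ∧ ‖star b * z * b - z‖ ≤ δ ∧
      ‖star a * z * b‖ ≤ δ ∧ ‖star b * z * a‖ ≤ δ := by
    intro δ hδ
    have hev : ∀ᶠ k in atTop,
        ‖star (x k) * Matrix.diagonal ![z, 0] * x k - Matrix.diagonal ![z, z]‖ < δ :=
      hx.eventually (gt_mem_nhds hδ)
    obtain ⟨k, hk⟩ := hev.exists
    have hentry : ∀ i j : Fin 2,
        ‖star (x k 0 i) * z * (x k 0 j) - (if i = j then z else 0)‖ ≤ δ := by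
      intro i j
      have h1 : (star (x k) * Matrix.diagonal ![z, 0] * x k - Matrix.diagonal ![z, z]) i j
          = star (x k 0 i) * z * (x k 0 j) - (if i = j then z else 0) := by
        simp [Matrix.sub_apply, Matrix.mul_apply, Matrix.diagonal, Fin.sum_univ_two,
          Matrix.star_apply, mul_assoc]
        fin_cases i <;> simp
      rw [← h1]
      exact le_of_lt (lt_of_le_of_lt (Matrix.norm_entry_le_entrywise_sup_norm _) hk)
    exact ⟨x k 0 0, x k 0 1, by simpa using hentry 0 0, by simpa using hentry 1 1,
      by simpa using hentry 0 1, by simpa using hentry 1 0⟩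
  obtain ⟨hre0, him⟩ := Complex.le_def.mp (hτpos z hz)
  simp only [Complex.zero_re, Complex.zero_im] at hre0 him
  have hbound : ∀ n : ℕ, (2 ^ n : ℝ) * (τ z).re ≤ ‖τ‖ * ‖z‖ := by
    intro n
    refine le_of_forall_pos_le_add fun ε' hε' => ?_
    set N : ℕ := 2 ^ n with hN
    set K : ℝ := ‖τ‖ * (1 + (N : ℝ) ^ 2) + (N : ℝ) * ‖τ‖ with hK
    have hK0 : (0:ℝ) ≤ K := by positivity
    set ε : ℝ := ε' / (K + 1) with hεdef
    have hε : 0 < ε := by positivity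
    obtain ⟨y, hy⟩ := aux_family z key n ε hε
    have h := aux_bound z hz τ hτtr ε hε y hy
    have hKε : K * ε ≤ ε' := by
      rw [hεdef]
      have h1 : K * (ε' / (K + 1)) = ε' * (K / (K + 1)) := by ring
      rw [h1]
      refine mul_le_of_le_one_right hε'.le ?_
      rw [div_le_one (by linarith)]
      linarith
    have hring : ‖τ‖ * (‖z‖ + ε + (N : ℝ) ^ 2 * ε) + (N : ℝ) * (‖τ‖ * ε)
        = ‖τ‖ * ‖z‖ + K * ε := by rw [hK]; ring
    have hcast : ((N : ℕ) : ℝ) = (2 ^ n : ℝ) := by rw [hN]; push_cast; ring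
    rw [← hcast]
    linarith [h, hKε, hring.le]
  have ht : (τ z).re = 0 := by
    by_contra h
    have htpos : 0 < (τ z).re := lt_of_le_of_ne hre0 (Ne.symm h)
    obtain ⟨n, hn⟩ := pow_unbounded_of_one_lt (R := ℝ) (‖τ‖ * ‖z‖ / (τ z).re) one_lt_two
    rw [div_lt_iff₀ htpos] at hn
    linarith [hbound n]
  exact Complex.ext (by simp [ht]) (by simp [← him])
end

section
/- A C*-algebra A is semi-finite if and only if its multiplier algebra M(A) is semi-finite; that is, every nonzero positive element of A dominates a nonzero finite positive element of A if and only if every nonzero positive element of M(A) dominates a nonzero finite positive element of M(A). -/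
open Filter Topology
open scoped MultiplierAlgebra

/-- An element `x` of a C*-algebra `A` is *finite in the sense of Cuntz and Pedersen*:
for every sequence `(z k)` in `A` such that `∑ star (z k) * z k` converges in norm to `x` and
`∑ z k * star (z k)` converges in norm to `y` with `y ≤ x`, one has `y = x`. -/
def CPFinite {A : Type*} [NonUnitalRing A] [StarRing A] [TopologicalSpace A]
    [PartialOrder A] (x : A) : Prop :=
  ∀ z : ℕ → A, ∀ y : A,
    Tendsto (fun n => ∑ k ∈ Finset.range n, star (z k) * z k) atTop (nhds x) →
    Tendsto (fun n => ∑ k ∈ Finset.range n, z k * star (z k)) atTop (nhds y) →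
    y ≤ x → y = x

section

variable {A : Type*} [NonUnitalCStarAlgebra A] [PartialOrder A] [StarOrderedRing A]

/-- The canonical partial order on the multiplier algebra `M(A) = 𝓜(ℂ, A)`. -/
noncomputable local instance : PartialOrder 𝓜(ℂ, A) := CStarAlgebra.spectralOrder _

local instance : StarOrderedRing 𝓜(ℂ, A) := CStarAlgebra.spectralOrderedRing _

set_option linter.unusedSectionVars false
set_option synthInstance.maxHeartbeats 400000
set_option maxHeartbeats 1000000

namespace SFAux

noncomputable def e : A →⋆ₙₐ[ℂ] 𝓜(ℂ, A) := DoubleCentralizer.coeHom (𝕜 := ℂ) (A := A)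

lemma norm_e (a : A) : ‖(e a : 𝓜(ℂ, A))‖ = ‖a‖ := by
  rw [← DoubleCentralizer.norm_fst (e a)]
  show ‖ContinuousLinearMap.mul ℂ A a‖ = ‖a‖
  exact ContinuousLinearMap.opNorm_mul_apply ℂ A a

lemma isometry_e : Isometry (e (A := A)) :=
  AddMonoidHomClass.isometry_of_norm _ norm_e

lemma e_injective : Function.Injective (e (A := A)) := isometry_e.injective

lemma isClosed_range_e : IsClosed (Set.range (e (A := A))) :=
  (isometry_e.isClosedEmbedding).isClosed_range

-- cancellation in a C*-algebra
lemma left_cancel {u v : A} (h : ∀ c, c * u = c * v) : u = v := by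
  have h2 : star (u - v) * (u - v) = 0 := by
    have := h (star (u - v))
    simp only [mul_sub] at *
    rw [sub_eq_zero]
    exact this
  have := CStarRing.star_mul_self_eq_zero_iff (u - v) |>.mp h2
  exact sub_eq_zero.mp this

lemma right_cancel {u v : A} (h : ∀ c, u * c = v * c) : u = v := by
  have h2 : (u - v) * star (u - v) = 0 := by
    have := h (star (u - v))
    simp only [sub_mul] at *
    rw [sub_eq_zero]
    exact this
  have := CStarRing.mul_star_self_eq_zero_iff (u - v) |>.mp h2
  exact sub_eq_zero.mp this

lemma mul_e (x : 𝓜(ℂ, A)) (a : A) : x * e a = e (x.fst a) := by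
  refine DoubleCentralizer.ext ℂ A _ _ (Prod.ext ?_ ?_)
  · ext b
    show x.fst (a * b) = x.fst a * b
    refine left_cancel fun c => ?_
    calc c * x.fst (a * b) = x.snd c * (a * b) := (x.central c (a * b)).symm
      _ = (x.snd c * a) * b := by rw [mul_assoc]
      _ = (c * x.fst a) * b := by rw [x.central]
      _ = c * (x.fst a * b) := by rw [mul_assoc]
  · ext b
    show x.snd b * a = b * x.fst a
    exact x.central b a

lemma e_mul (x : 𝓜(ℂ, A)) (a : A) : e a * x = e (x.snd a) := by
  refine DoubleCentralizer.ext ℂ A _ _ (Prod.ext ?_ ?_)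
  · ext b
    show a * x.fst b = x.snd a * b
    exact (x.central a b).symm
  · ext b
    show x.snd (b * a) = b * x.snd a
    refine right_cancel fun c => ?_
    calc x.snd (b * a) * c = (b * a) * x.fst c := x.central _ _
      _ = b * (a * x.fst c) := by rw [mul_assoc]
      _ = b * (x.snd a * c) := by rw [x.central]
      _ = (b * x.snd a) * c := by rw [mul_assoc]


-- order transfer
lemma e_nonneg {a : A} (ha : 0 ≤ a) : 0 ≤ e a := by
  have h1 : e a = star (e (CFC.sqrt a)) * e (CFC.sqrt a) := by
    rw [← map_star, ← map_mul]
    congr 1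
    rw [(IsSelfAdjoint.of_nonneg (CFC.sqrt_nonneg _)).star_eq, CFC.sqrt_mul_sqrt_self a ha]
  rw [h1]
  exact star_mul_self_nonneg _

lemma e_nonneg_iff {a : A} : 0 ≤ e a ↔ 0 ≤ a := by
  refine ⟨fun h => ?_, e_nonneg⟩
  have hsa : IsSelfAdjoint a := by
    have : e (star a) = e a := by rw [map_star, (IsSelfAdjoint.of_nonneg h).star_eq]
    exact e_injective this
  -- let n be the negative part of a
  set n : A := a⁻ with hn
  have hn0 : 0 ≤ n := CFC.negPart_nonneg a
  have hcube : 0 ≤ n * n * n := by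
    have h1 : n * n * n = star (CFC.sqrt n * n) * (CFC.sqrt n * n) := by
      rw [star_mul, (IsSelfAdjoint.of_nonneg (CFC.sqrt_nonneg n)).star_eq,
        (IsSelfAdjoint.of_nonneg hn0).star_eq]
      calc n * n * n = n * (CFC.sqrt n * CFC.sqrt n) * n := by
            rw [CFC.sqrt_mul_sqrt_self n hn0]
        _ = n * CFC.sqrt n * (CFC.sqrt n * n) := by noncomm_ring
    rw [h1]
    exact star_mul_self_nonneg _
  -- conjugation gives the opposite inequality in the multiplier algebra
  have hconj : 0 ≤ e n * e a * e n := by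
    have : (0 : 𝓜(ℂ, A)) ≤ star (e n) * e a * e n := star_left_conjugate_nonneg h _
    rwa [← map_star, (IsSelfAdjoint.of_nonneg hn0).star_eq] at this
  have hna : n * a * n = -(n * n * n) := by
    conv_lhs => rw [← CFC.posPart_sub_negPart a hsa]
    rw [mul_sub, sub_mul, CFC.negPart_mul_posPart a]
    simp [hn]
  have hle : e (n * n * n) ≤ 0 := by
    have : e n * e a * e n = e (n * a * n) := by rw [← map_mul, ← map_mul]
    rw [this, hna, map_neg] at hconj
    exact neg_nonneg.mp hconj
  have hze : e (n * n * n) = 0 :=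
    le_antisymm hle (e_nonneg hcube)
  have hz : n * n * n = 0 := by
    apply e_injective
    rw [hze, map_zero]
  have hnz : n = 0 := by
    have h4 : n * n * (n * n) = 0 := by
      calc n * n * (n * n) = (n * n * n) * n := by noncomm_ring
        _ = 0 := by rw [hz, zero_mul]
    have hsq : IsSelfAdjoint (n * n) := by
      rw [IsSelfAdjoint, star_mul, (IsSelfAdjoint.of_nonneg hn0).star_eq]
    have hn4 : ‖n‖ ^ 4 = 0 := by
      have e1 := CStarRing.norm_star_mul_self (x := n)
      rw [(IsSelfAdjoint.of_nonneg hn0).star_eq] at e1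
      have e2 := CStarRing.norm_star_mul_self (x := n * n)
      rw [hsq.star_eq] at e2
      rw [h4] at e2
      simp only [norm_zero] at e2
      rw [e1] at e2
      nlinarith [norm_nonneg n]
    have : ‖n‖ = 0 := by
      have := pow_eq_zero_iff (n := 4) (by norm_num) |>.mp hn4
      exact this
    exact norm_eq_zero.mp this
  have := CFC.posPart_sub_negPart a hsa
  rw [← hn, hnz, sub_zero] at this
  rw [← this]
  exact CFC.posPart_nonneg a

lemma e_le_e {a b : A} : e a ≤ e b ↔ a ≤ b := by
  rw [← sub_nonneg, ← sub_nonneg (a := b), ← map_sub, e_nonneg_iff]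


-- scalar multiplication is monotone
lemma smul_le_smul_mult {v w : 𝓜(ℂ, A)} (hvw : v ≤ w) {r : ℝ} (hr : 0 ≤ r) :
    r • v ≤ r • w := by
  rw [← sub_nonneg, ← smul_sub]
  rw [← sub_nonneg] at hvw
  set d := w - v
  set s := CFC.sqrt d with hs
  have hs0 : 0 ≤ s := CFC.sqrt_nonneg (a := d)
  have hss : s * s = d := CFC.sqrt_mul_sqrt_self d hvw
  have key : r • d = star ((Real.sqrt r : ℂ) • s) * ((Real.sqrt r : ℂ) • s) := by
    rw [star_smul, (IsSelfAdjoint.of_nonneg hs0).star_eq, smul_mul_smul_comm]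
    rw [hss]
    rw [Complex.star_def, Complex.conj_ofReal, ← Complex.ofReal_mul,
      Real.mul_self_sqrt hr, Complex.coe_smul]
  rw [key]
  exact star_mul_self_nonneg _

-- the key approximation lemma
lemma mem_range_e_of_star_mul_self_le (c u : 𝓜(ℂ, A))
    (hu : u ∈ Set.range (e (A := A))) (h : star c * c ≤ u) :
    c ∈ Set.range (e (A := A)) := by
  have hu0 : 0 ≤ u := le_trans (star_mul_self_nonneg c) h
  have hspec : ∀ t ∈ spectrum ℝ u, 0 ≤ t := fun t ht =>
    spectrum_nonneg_of_nonneg hu0 ht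
  obtain ⟨xu, hxu⟩ := hu
  have key : ∀ ε : ℝ, 0 < ε → ∃ d ∈ Set.range (e (A := A)), ‖c - d‖ ^ 2 ≤ ε := by
    intro ε hε
    have hcont0 : ContinuousOn (fun t : ℝ => (t + ε)⁻¹) (spectrum ℝ u) := by
      refine ContinuousOn.inv₀ (by fun_prop) fun t ht => ?_
      have := hspec t ht
      positivity
    have hcontf : ContinuousOn (fun t : ℝ => t * (t + ε)⁻¹) (spectrum ℝ u) :=
      continuousOn_id.mul hcont0
    set k : 𝓜(ℂ, A) := cfc (fun t : ℝ => (t + ε)⁻¹) u with hk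
    set g : 𝓜(ℂ, A) := cfc (fun t : ℝ => t * (t + ε)⁻¹) u with hg
    have hgk : g = u * k := by
      rw [hg, hk]
      have h2 := cfc_mul (fun t : ℝ => t) (fun t : ℝ => (t + ε)⁻¹) u continuousOn_id hcont0
      rw [h2, cfc_id' ℝ u (ha := IsSelfAdjoint.of_nonneg hu0)]
    have hmem : c * g ∈ Set.range (e (A := A)) := by
      rw [hgk, ← mul_assoc, ← hxu, mul_e, e_mul]
      exact ⟨_, rfl⟩
    refine ⟨c * g, hmem, ?_⟩
    have hgsa : IsSelfAdjoint g := cfc_predicate _ u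
    have h1gsa : IsSelfAdjoint (1 - g) := (IsSelfAdjoint.one (R := 𝓜(ℂ, A))).sub hgsa
    have hcg : c - c * g = c * (1 - g) := by rw [mul_one_sub]
    rw [hcg]
    have hnorm : ‖c * (1 - g)‖ ^ 2 = ‖star (c * (1 - g)) * (c * (1 - g))‖ := by
      rw [CStarRing.norm_star_mul_self, sq]
    rw [hnorm]
    have hexpand : star (c * (1 - g)) * (c * (1 - g)) = (1 - g) * (star c * c) * (1 - g) := by
      rw [star_mul, h1gsa.star_eq]
      noncomm_ring
    rw [hexpand]
    have h0 : (0 : 𝓜(ℂ, A)) ≤ (1 - g) * (star c * c) * (1 - g) := by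
      have := star_left_conjugate_nonneg (star_mul_self_nonneg c) (1 - g)
      rwa [h1gsa.star_eq] at this
    have hconj : (1 - g) * (star c * c) * (1 - g) ≤ (1 - g) * u * (1 - g) := by
      have := star_left_conjugate_le_conjugate h (1 - g)
      rwa [h1gsa.star_eq] at this
    refine le_trans (CStarAlgebra.norm_le_norm_of_nonneg_of_le h0 hconj) ?_
    -- now compute the norm of (1 - g) * u * (1 - g) via cfc
    have h1cont : ContinuousOn (fun t : ℝ => 1 - t * (t + ε)⁻¹) (spectrum ℝ u) :=
      continuousOn_const.sub hcontf
    have h1g : (1 : 𝓜(ℂ, A)) - g = cfc (fun t : ℝ => 1 - t * (t + ε)⁻¹) u := by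
      rw [cfc_sub _ _ u continuousOn_const hcontf, cfc_const (1 : ℝ) u (IsSelfAdjoint.of_nonneg hu0), map_one, hg]
    have hrw : (1 - g) * u * (1 - g)
        = cfc (fun t : ℝ => (1 - t * (t + ε)⁻¹) * t * (1 - t * (t + ε)⁻¹)) u := by
      calc (1 - g) * u * (1 - g)
          = cfc (fun t : ℝ => 1 - t * (t + ε)⁻¹) u * cfc (fun t : ℝ => t) u
            * cfc (fun t : ℝ => 1 - t * (t + ε)⁻¹) u := by rw [h1g, cfc_id' ℝ u (ha := IsSelfAdjoint.of_nonneg hu0)]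
        _ = cfc (fun t : ℝ => (1 - t * (t + ε)⁻¹) * t) u
            * cfc (fun t : ℝ => 1 - t * (t + ε)⁻¹) u := by
            rw [← cfc_mul (fun t : ℝ => 1 - t * (t + ε)⁻¹) (fun t : ℝ => t) u h1cont
              continuousOn_id]
        _ = cfc (fun t : ℝ => (1 - t * (t + ε)⁻¹) * t * (1 - t * (t + ε)⁻¹)) u := by
            rw [← cfc_mul (fun t : ℝ => (1 - t * (t + ε)⁻¹) * t)
              (fun t : ℝ => 1 - t * (t + ε)⁻¹) u (h1cont.mul continuousOn_id) h1cont]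
    rw [hrw]
    refine norm_cfc_le hε.le fun t ht => ?_
    have ht0 : 0 ≤ t := hspec t ht
    have hpos : 0 < t + ε := by linarith
    have h1 : 1 - t * (t + ε)⁻¹ = ε / (t + ε) := by field_simp; ring
    rw [h1]
    have hval : ε / (t + ε) * t * (ε / (t + ε)) = ε * ε * t / ((t + ε) * (t + ε)) := by
      field_simp
    rw [hval, Real.norm_eq_abs, abs_of_nonneg (by positivity), div_le_iff₀ (by positivity)]
    nlinarith [mul_nonneg (mul_nonneg hε.le ht0) ht0, mul_nonneg hε.le (mul_nonneg ht0 hε.le),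
      mul_pos hε (mul_pos hε hε)]
  -- conclude c is in the closed range
  have : c ∈ closure (Set.range (e (A := A))) := by
    rw [Metric.mem_closure_iff]
    intro ε hε
    obtain ⟨d, hd, hbound⟩ := key ((ε / 2) ^ 2) (by positivity)
    refine ⟨d, hd, ?_⟩
    have h1 : ‖c - d‖ ≤ ε / 2 := by
      have h2 : ‖c - d‖ = Real.sqrt (‖c - d‖ ^ 2) := (Real.sqrt_sq (norm_nonneg _)).symm
      rw [h2]
      calc Real.sqrt (‖c - d‖ ^ 2) ≤ Real.sqrt ((ε / 2) ^ 2) := Real.sqrt_le_sqrt (by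
            calc ‖c - d‖ ^ 2 ≤ (ε / 2) ^ 2 := hbound)
        _ = ε / 2 := Real.sqrt_sq (by positivity)
    calc dist c d = ‖c - d‖ := dist_eq_norm c d
      _ ≤ ε / 2 := h1
      _ < ε := by linarith
  rwa [isClosed_range_e.closure_eq] at this


-- hereditary lemma
lemma mem_range_e_of_nonneg_of_le {v u : 𝓜(ℂ, A)} (hv : 0 ≤ v) (hvu : v ≤ u)
    (hu : u ∈ Set.range (e (A := A))) : v ∈ Set.range (e (A := A)) := by
  set c := CFC.sqrt v with hc
  have hcsa : IsSelfAdjoint c := IsSelfAdjoint.of_nonneg (CFC.sqrt_nonneg _)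
  have hcc : star c * c = v := by
    rw [hcsa.star_eq, hc, CFC.sqrt_mul_sqrt_self v hv]
  have hcmem : c ∈ Set.range (e (A := A)) :=
    mem_range_e_of_star_mul_self_le c u hu (hcc ▸ hvu)
  obtain ⟨a, ha⟩ := hcmem
  refine ⟨a * a, ?_⟩
  calc e (a * a) = star c * c := by
        rw [map_mul, ha]
        congr 1
        exact hcsa.star_eq.symm
    _ = v := hcc

-- partial sums of nonnegative elements are dominated by the limit
lemma partial_sum_le_limit {f : ℕ → 𝓜(ℂ, A)} (hf : ∀ k, 0 ≤ f k) {L : 𝓜(ℂ, A)}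
    (hL : Tendsto (fun n => ∑ k ∈ Finset.range n, f k) atTop (nhds L)) (n : ℕ) :
    ∑ k ∈ Finset.range n, f k ≤ L := by
  refine ge_of_tendsto hL ?_
  filter_upwards [eventually_ge_atTop n] with m hm
  exact Finset.sum_le_sum_of_subset_of_nonneg (Finset.range_subset_range.mpr hm)
    fun i _ _ => hf i

-- transfer of finiteness from A to M(A)
lemma CPFinite_e {y : A} (hy : CPFinite y) : CPFinite (e y : 𝓜(ℂ, A)) := by
  intro z w hz hw hle
  have hzS : ∀ k, z k ∈ Set.range (e (A := A)) := by
    intro k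
    refine mem_range_e_of_star_mul_self_le (z k) (e y) ⟨y, rfl⟩ ?_
    have h1 : star (z k) * z k ≤ ∑ j ∈ Finset.range (k + 1), star (z j) * z j := by
      rw [Finset.sum_range_succ]
      exact le_add_of_nonneg_left (Finset.sum_nonneg fun j _ => star_mul_self_nonneg (z j))
    exact h1.trans (partial_sum_le_limit (fun j => star_mul_self_nonneg (z j)) hz (k + 1))
  choose ζ hζ using hzS
  have hsum1 : ∀ n, ∑ k ∈ Finset.range n, star (z k) * z k
      = e (∑ k ∈ Finset.range n, star (ζ k) * ζ k) := by
    intro n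
    rw [map_sum]
    exact Finset.sum_congr rfl fun k _ => by rw [map_mul, map_star, hζ]
  have hsum2 : ∀ n, ∑ k ∈ Finset.range n, z k * star (z k)
      = e (∑ k ∈ Finset.range n, ζ k * star (ζ k)) := by
    intro n
    rw [map_sum]
    exact Finset.sum_congr rfl fun k _ => by rw [map_mul, map_star, hζ]
  -- w is in the range of e
  have hwS : w ∈ Set.range (e (A := A)) := by
    refine isClosed_range_e.mem_of_tendsto hw (Eventually.of_forall fun n => ?_)
    rw [hsum2 n]
    exact ⟨_, rfl⟩
  obtain ⟨w', hw'⟩ := hwS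
  -- pull back convergence to A
  have hz' : Tendsto (fun n => ∑ k ∈ Finset.range n, star (ζ k) * ζ k) atTop (nhds y) := by
    rw [isometry_e.isClosedEmbedding.isEmbedding.tendsto_nhds_iff]
    convert hz using 1
    funext n
    exact (hsum1 n).symm
  have hw'' : Tendsto (fun n => ∑ k ∈ Finset.range n, ζ k * star (ζ k)) atTop (nhds w') := by
    rw [isometry_e.isClosedEmbedding.isEmbedding.tendsto_nhds_iff]
    rw [hw']
    convert hw using 1
    funext n
    exact (hsum2 n).symm
  have hle' : w' ≤ y := e_le_e.mp (hw' ▸ hle)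
  have := hy ζ w' hz' hw'' hle'
  rw [← hw', this]

-- transfer of finiteness from M(A) to A
lemma CPFinite_of_e {y : A} (hy : CPFinite (e y : 𝓜(ℂ, A))) : CPFinite y := by
  intro z v hz hv hle
  have h1 : Tendsto (fun n => ∑ k ∈ Finset.range n, star (e (z k)) * e (z k)) atTop
      (nhds (e y : 𝓜(ℂ, A))) := by
    have := (isometry_e.continuous.tendsto y).comp hz
    convert this using 1
    funext n
    show ∑ k ∈ Finset.range n, star (e (z k)) * e (z k) = e (∑ k ∈ Finset.range n, star (z k) * z k)
    rw [map_sum]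
    exact Finset.sum_congr rfl fun k _ => by rw [map_mul, map_star]
  have h2 : Tendsto (fun n => ∑ k ∈ Finset.range n, e (z k) * star (e (z k))) atTop
      (nhds (e v : 𝓜(ℂ, A))) := by
    have := (isometry_e.continuous.tendsto v).comp hv
    convert this using 1
    funext n
    show ∑ k ∈ Finset.range n, e (z k) * star (e (z k)) = e (∑ k ∈ Finset.range n, z k * star (z k))
    rw [map_sum]
    exact Finset.sum_congr rfl fun k _ => by rw [map_mul, map_star]
  have := hy (fun k => e (z k)) (e v) h1 h2 (e_le_e.mpr hle)
  exact e_injective this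

-- scaling lemma
lemma CPFinite_smul {v : 𝓜(ℂ, A)} (h : CPFinite v) {r : ℝ} (hr : 0 < r) :
    CPFinite (r • v) := by
  intro z w hz hw hle
  set s : ℂ := (Real.sqrt r⁻¹ : ℂ) with hs
  have hss : star s * s = ((r⁻¹ : ℝ) : ℂ) := by
    rw [hs, Complex.star_def, Complex.conj_ofReal, ← Complex.ofReal_mul,
      Real.mul_self_sqrt (by positivity)]
  have key1 : ∀ k : ℕ, star (s • z k) * (s • z k) = r⁻¹ • (star (z k) * z k) := by
    intro k
    rw [star_smul, smul_mul_smul_comm, hss, ← Complex.coe_smul]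
  have key2 : ∀ k : ℕ, (s • z k) * star (s • z k) = r⁻¹ • (z k * star (z k)) := by
    intro k
    rw [star_smul, smul_mul_smul_comm, mul_comm s (star s), hss, ← Complex.coe_smul]
  have hz2 := hz.const_smul (r⁻¹ : ℝ)
  rw [smul_smul, inv_mul_cancel₀ hr.ne', one_smul] at hz2
  have hw2 := hw.const_smul (r⁻¹ : ℝ)
  have hle2 : r⁻¹ • w ≤ v := by
    have := smul_le_smul_mult hle (le_of_lt (inv_pos.mpr hr))
    rwa [smul_smul, inv_mul_cancel₀ hr.ne', one_smul] at this
  have hfin := h (fun k => s • z k) (r⁻¹ • w)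
    (by simpa only [key1, ← Finset.smul_sum] using hz2)
    (by simpa only [key2, ← Finset.smul_sum] using hw2) hle2
  rw [← hfin, smul_smul, mul_inv_cancel₀ hr.ne', one_smul]

-- main theorem
theorem main :
    (∀ x : A, 0 ≤ x → x ≠ 0 → ∃ y : A, 0 ≤ y ∧ y ≠ 0 ∧ y ≤ x ∧ CPFinite y) ↔
    (∀ x : 𝓜(ℂ, A), 0 ≤ x → x ≠ 0 → ∃ y : 𝓜(ℂ, A), 0 ≤ y ∧ y ≠ 0 ∧ y ≤ x ∧ CPFinite y) := by
  constructor
  · intro hA x hx hx0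
    -- find b : A with x.fst b ≠ 0
    obtain ⟨b, hb⟩ : ∃ b : A, x.fst b ≠ 0 := by
      by_contra hcon
      push_neg at hcon
      apply hx0
      have hfst : x.fst = 0 := ContinuousLinearMap.ext fun b => by
        rw [hcon b]; rfl
      have : ‖x‖ = 0 := by rw [← DoubleCentralizer.norm_fst, hfst, norm_zero]
      exact norm_eq_zero.mp this
    set q : 𝓜(ℂ, A) := CFC.sqrt x with hqdef
    have hq0 : 0 ≤ q := CFC.sqrt_nonneg (a := x)
    have hqsa : IsSelfAdjoint q := IsSelfAdjoint.of_nonneg hq0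
    have hqq : q * q = x := by
      have := CFC.sqrt_mul_sqrt_self x hx
      rw [hqdef]; exact this
    set c : 𝓜(ℂ, A) := q * e b with hcdef
    have hcne : c ≠ 0 := by
      intro hczero
      apply hb
      apply e_injective (A := A)
      rw [map_zero]
      have h1 : x * e b = q * c := by rw [hcdef, ← mul_assoc, hqq]
      rw [← mul_e, h1, hczero, mul_zero]
    set u : 𝓜(ℂ, A) := q * e (b * star b) * q with hudef
    have hucc : u = c * star c := by
      rw [hudef, hcdef, star_mul, ← map_star, hqsa.star_eq, map_mul]
      simp only [mul_assoc]
    have hu0 : 0 ≤ u := hucc ▸ mul_star_self_nonneg c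
    have hune : u ≠ 0 := by
      intro hzero
      apply hcne
      have : ‖c‖ * ‖c‖ = 0 := by
        rw [← CStarRing.norm_self_mul_star, ← hucc, hzero, norm_zero]
      rcases mul_self_eq_zero.mp this with h
      exact norm_eq_zero.mp h
    set r : ℝ := ‖(e (b * star b) : 𝓜(ℂ, A))‖ with hrdef
    have hr : 0 < r := by
      rcases (norm_nonneg (e (b * star b) : 𝓜(ℂ, A))).lt_or_eq with h | h
      · exact h
      · exfalso
        apply hune
        have hz : (e (b * star b) : 𝓜(ℂ, A)) = 0 := norm_eq_zero.mp h.symm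
        rw [hudef, hz, mul_zero, zero_mul]
    have hbbsa : IsSelfAdjoint (e (b * star b) : 𝓜(ℂ, A)) := by
      rw [IsSelfAdjoint, ← map_star, star_mul, star_star]
    have hur : u ≤ r • x := by
      have := CStarAlgebra.star_left_conjugate_le_norm_smul (a := q) (b := (e (b * star b) : 𝓜(ℂ, A))) hbbsa
      rwa [hqsa.star_eq, hqq, ← hudef, ← hrdef] at this
    have humem : u ∈ Set.range (e (A := A)) := by
      rw [hudef, mul_e q (b * star b), e_mul]
      exact ⟨_, rfl⟩
    obtain ⟨a', ha'⟩ := humem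
    have ha'0 : 0 ≤ a' := e_nonneg_iff.mp (ha' ▸ hu0)
    have ha'ne : a' ≠ 0 := by
      intro hzero
      exact hune (by rw [← ha', hzero, map_zero])
    obtain ⟨y, hy0, hyne, hyle, hyfin⟩ := hA a' ha'0 ha'ne
    refine ⟨r⁻¹ • (e y : 𝓜(ℂ, A)), ?_, ?_, ?_, ?_⟩
    · have := smul_le_smul_mult (v := 0) (w := (e y : 𝓜(ℂ, A)))
        (e_nonneg_iff.mpr hy0) (le_of_lt (inv_pos.mpr hr))
      rwa [smul_zero] at this
    · refine smul_ne_zero (inv_ne_zero hr.ne') ?_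
      intro hzero
      exact hyne (e_injective (by rw [hzero, map_zero]))
    · have h1 : (e y : 𝓜(ℂ, A)) ≤ r • x := by
        calc (e y : 𝓜(ℂ, A)) ≤ e a' := e_le_e.mpr hyle
          _ = u := ha'
          _ ≤ r • x := hur
      have h2 := smul_le_smul_mult h1 (le_of_lt (inv_pos.mpr hr))
      rwa [smul_smul, inv_mul_cancel₀ hr.ne', one_smul] at h2
    · exact CPFinite_smul (CPFinite_e hyfin) (inv_pos.mpr hr)
  · intro hM x hx hx0
    have h1 : 0 ≤ (e x : 𝓜(ℂ, A)) := e_nonneg_iff.mpr hx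
    have h2 : (e x : 𝓜(ℂ, A)) ≠ 0 := fun hczero =>
      hx0 (e_injective (by rw [hczero, map_zero]))
    obtain ⟨Y, hY0, hYne, hYle, hYfin⟩ := hM (e x) h1 h2
    obtain ⟨y, hy⟩ := mem_range_e_of_nonneg_of_le hY0 hYle ⟨x, rfl⟩
    refine ⟨y, ?_, ?_, ?_, ?_⟩
    · exact e_nonneg_iff.mp (hy.symm ▸ hY0)
    · intro hzero
      exact hYne (by rw [← hy, hzero, map_zero])
    · exact e_le_e.mp (hy.symm ▸ hYle)
    · exact CPFinite_of_e (hy.symm ▸ hYfin)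


end SFAux

/-- A C*-algebra `A` is semi-finite (in the sense of Cuntz and Pedersen) if and only if its
multiplier algebra `M(A)` is semi-finite: every nonzero positive element of `A` dominates a
nonzero finite positive element of `A` if and only if every nonzero positive element of `M(A)`
dominates a nonzero finite positive element of `M(A)`. -/
theorem semifinite_iff_multiplier_semifinite :
    (∀ x : A, 0 ≤ x → x ≠ 0 → ∃ y : A, 0 ≤ y ∧ y ≠ 0 ∧ y ≤ x ∧ CPFinite y) ↔
    (∀ x : 𝓜(ℂ, A), 0 ≤ x → x ≠ 0 → ∃ y : 𝓜(ℂ, A), 0 ≤ y ∧ y ≠ 0 ∧ y ≤ x ∧ CPFinite y) :=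
  SFAux.main

end
end
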